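/- arXiv:1205.1462 — 7 statements merged into one kernel-verified Lean document; each statement's English description precedes it below -/
import Mathlib

section
/- Let q, n be positive integers and 0 ≤ ε < 1 a real number. Let C ⊆ [q]^n be a code such that any two distinct codewords have Hamming distance at least (1 − ε)·n. Then C is (1 − √ε, 2qn)-list decodable: for every z ∈ [q]^n, the number of codewords c ∈ C with Δ(c, z) ≤ (1 − √ε)·n is at most 2qn. -/
open Module RealInnerProductSpace Finset

open Module RealInnerProductSpace

lemma rips {E : Type*} [NormedAddCommGroup E] [InnerProductSpace ℝ E]
    {x : E} (hx : x ≠ 0) : 0 < ⟪x, x⟫ := by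
  have h : ⟪x, x⟫ ≠ 0 := fun h => hx ((@inner_self_eq_zero ℝ _ _ _ _ x).mp h)
  exact lt_of_le_of_ne real_inner_self_nonneg (Ne.symm h)

theorem obtuse_card_le : ∀ (d : ℕ) (E : Type) [NormedAddCommGroup E]
    [InnerProductSpace ℝ E] [FiniteDimensional ℝ E], finrank ℝ E ≤ d →
    ∀ S : Finset E, (∀ v ∈ S, v ≠ 0) →
    (∀ u ∈ S, ∀ w ∈ S, u ≠ w → ⟪u, w⟫ ≤ 0) → S.card ≤ 2 * d := by
  intro d
  induction d with
  | zero =>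
    intro E _ _ _ hd S h0 _
    have : Subsingleton E := by
      rw [← finrank_zero_iff (R := ℝ)]; omega
    rcases S.eq_empty_or_nonempty with h | ⟨v, hv⟩
    · simp [h]
    · exact absurd (Subsingleton.elim v 0) (h0 v hv)
  | succ d ih =>
    intro E _ _ _ hd S h0 hS
    classical
    rcases S.eq_empty_or_nonempty with h | ⟨v, hv⟩
    · simp [h]
    have hv0 : v ≠ 0 := h0 v hv
    have hvv : (0:ℝ) < ⟪v, v⟫ := rips hv0
    set lam : E → ℝ := fun u => ⟪v, u⟫ / ⟪v, v⟫ with hlam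
    set p : E → E := fun u => u - lam u • v with hp
    have hlv : ∀ u, lam u * ⟪v, v⟫ = ⟪v, u⟫ := by
      intro u; exact div_mul_cancel₀ _ hvv.ne'
    have hperp : ∀ u, ⟪v, p u⟫ = 0 := by
      intro u
      simp only [hp, inner_sub_right, real_inner_smul_right, hlv]
      ring
    have hkey : ∀ u w, ⟪p u, p w⟫ = ⟪u, w⟫ - lam u * lam w * ⟪v, v⟫ := by
      intro u w
      have h1 : ⟪u, v⟫ = lam u * ⟪v, v⟫ := by rw [hlv, real_inner_comm]
      have h2 : ⟪v, w⟫ = lam w * ⟪v, v⟫ := (hlv w).symm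
      simp only [hp, inner_sub_left, inner_sub_right, real_inner_smul_left,
        real_inner_smul_right, h1, h2]
      ring
    have hlamle : ∀ u ∈ S, u ≠ v → lam u ≤ 0 := by
      intro u hu huv
      exact div_nonpos_of_nonpos_of_nonneg (hS v hv u hu (fun h => huv h.symm)) hvv.le
    have hpz : ∀ u, p u = 0 → u = lam u • v := by
      intro u h; have := sub_eq_zero.mp h; exact this
    -- the subspace
    set K := (ℝ ∙ v)ᗮ with hK
    have hmem : ∀ u, p u ∈ K := by
      intro u
      rw [hK, Submodule.mem_orthogonal_singleton_iff_inner_right]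
      exact hperp u
    have hfr : finrank ℝ K ≤ d := by
      rw [hK]
      have h1 := Submodule.finrank_add_finrank_orthogonal (K := (ℝ ∙ v)) (𝕜 := ℝ)
      rw [finrank_span_singleton hv0] at h1
      omega
    set g : E → K := fun u => ⟨p u, hmem u⟩ with hg
    set S₁ := (S.erase v).filter (fun u => p u ≠ 0) with hS₁
    set S₂ := (S.erase v).filter (fun u => p u = 0) with hS₂
    have hS₂card : S₂.card ≤ 1 := by
      rw [Finset.card_le_one]
      intro a ha b hb
      by_contra hab
      rw [hS₂, Finset.mem_filter, Finset.mem_erase] at ha hb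
      have hla : lam a < 0 := by
        rcases lt_or_eq_of_le (hlamle a ha.1.2 ha.1.1) with h | h
        · exact h
        · exfalso; apply h0 a ha.1.2
          rw [hpz a ha.2, h, zero_smul]
      have hlb : lam b < 0 := by
        rcases lt_or_eq_of_le (hlamle b hb.1.2 hb.1.1) with h | h
        · exact h
        · exfalso; apply h0 b hb.1.2
          rw [hpz b hb.2, h, zero_smul]
      have : ⟪a, b⟫ = lam a * lam b * ⟪v, v⟫ := by
        conv_lhs => rw [hpz a ha.2, hpz b hb.2]
        rw [real_inner_smul_left, real_inner_smul_right]; ring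
      have hpos : 0 < ⟪a, b⟫ := by
        rw [this]; exact mul_pos (mul_pos_of_neg_of_neg hla hlb) hvv
      exact absurd (hS a ha.1.2 b hb.1.2 hab) (not_le.2 hpos)
    -- injectivity of g on S₁
    have hginj : Set.InjOn g S₁ := by
      intro a ha b hb hab
      by_contra hne
      rw [hS₁, Finset.coe_filter] at ha hb
      obtain ⟨ha1, ha2⟩ := ha
      obtain ⟨hb1, hb2⟩ := hb
      rw [Finset.mem_erase] at ha1 hb1
      have hpab : p a = p b := congrArg Subtype.val hab
      have h1 : ⟪a, b⟫ = ⟪p a, p a⟫ + lam a * lam b * ⟪v, v⟫ := by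
        have := hkey a b
        rw [hpab] at this ⊢
        linarith [hkey a b]
      have hppos : 0 < ⟪p a, p a⟫ := rips ha2
      have hll : 0 ≤ lam a * lam b := by
        nlinarith [hlamle a ha1.2 ha1.1, hlamle b hb1.2 hb1.1]
      have : 0 < ⟪a, b⟫ := by nlinarith
      exact absurd (hS a ha1.2 b hb1.2 hne) (not_le.2 this)
    have hT := ih K hfr (S₁.image g)
      (by
        intro x hx
        obtain ⟨u, hu, rfl⟩ := Finset.mem_image.mp hx
        rw [hS₁, Finset.mem_filter] at hu
        intro h
        exact hu.2 (by simpa [hg, Submodule.mk_eq_zero] using h))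
      (by
        intro x hx y hy hxy
        obtain ⟨a, ha, rfl⟩ := Finset.mem_image.mp hx
        obtain ⟨b, hb, rfl⟩ := Finset.mem_image.mp hy
        have hab : a ≠ b := fun h => hxy (by rw [h])
        rw [hS₁, Finset.mem_filter, Finset.mem_erase] at ha hb
        have : ⟪g a, g b⟫ = ⟪p a, p b⟫ := Submodule.coe_inner K _ _
        rw [this, hkey]
        have hll : 0 ≤ lam a * lam b := by
          nlinarith [hlamle a ha.1.2 ha.1.1, hlamle b hb.1.2 hb.1.1]
        have := hS a ha.1.2 b hb.1.2 hab
        nlinarith)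
    rw [Finset.card_image_of_injOn hginj] at hT
    have hsplit : S₁.card + S₂.card = (S.erase v).card := by
      rw [hS₁, hS₂]
      have := Finset.card_filter_add_card_filter_not
        (s := S.erase v) (p := fun u => p u ≠ 0)
      simpa using this
    have herase : (S.erase v).card = S.card - 1 := Finset.card_erase_of_mem hv
    have hScard : 1 ≤ S.card := Finset.card_pos.2 ⟨v, hv⟩
    omega


noncomputable def phi (q n : ℕ) (c : Fin n → Fin q) : EuclideanSpace ℝ (Fin n × Fin q) :=
  WithLp.toLp 2 (fun p : Fin n × Fin q => if c p.1 = p.2 then 1 else 0)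

lemma inner_phi (q n : ℕ) (x y : Fin n → Fin q) :
    ⟪phi q n x, phi q n y⟫ = (n : ℝ) - hammingDist x y := by
  rw [PiLp.inner_apply]
  have h1 : ∀ p : Fin n × Fin q, ⟪phi q n x p, phi q n y p⟫
      = if x p.1 = p.2 ∧ y p.1 = p.2 then (1:ℝ) else 0 := by
    intro p
    simp only [phi, PiLp.toLp_apply, RCLike.inner_apply, ite_and]
    split_ifs <;> simp
  simp only [h1]
  rw [Fintype.sum_prod_type]
  have h2 : ∀ i : Fin n, (∑ a : Fin q, if x i = a ∧ y i = a then (1:ℝ) else 0)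
      = if x i = y i then 1 else 0 := by
    intro i
    by_cases h : x i = y i
    · rw [if_pos h]
      rw [Finset.sum_eq_single (y i)]
      · simp [h]
      · intro a _ ha
        rw [if_neg]
        rintro ⟨-, h2'⟩; exact ha h2'.symm
      · simp
    · rw [if_neg h]
      apply Finset.sum_eq_zero
      intro a _
      rw [if_neg]
      rintro ⟨h1', h2'⟩; exact h (h1'.trans h2'.symm)
  simp only [h2]
  rw [Finset.sum_boole]
  have h3 : (Finset.filter (fun i => x i = y i) Finset.univ).card
      + (Finset.filter (fun i => ¬ x i = y i) Finset.univ).card = n := by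
    rw [Finset.card_filter_add_card_filter_not]; simp
  have h4 : hammingDist x y = (Finset.filter (fun i => ¬ x i = y i) Finset.univ).card := by
    rfl
  simp only [Finset.sum_const, nsmul_eq_mul, mul_one, h4]
  have : ((Finset.filter (fun i => x i = y i) Finset.univ).card : ℝ)
      + ((Finset.filter (fun i => ¬ x i = y i) Finset.univ).card : ℝ) = n := by
    exact_mod_cast h3
  linarith

/-- **Johnson bound for large-distance codes.**
If `C ⊆ [q]^n` is a code in which any two distinct codewords are at Hamming distance at
least `(1 − ε)·n` (for some `0 ≤ ε < 1`), then `C` is `(1 − √ε, 2qn)`-list decodable: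
for every `z ∈ [q]^n` the number of codewords within Hamming distance `(1 − √ε)·n` of `z`
is at most `2qn`. -/
theorem large_distance_implies_list_decodable (q n : ℕ) (hq : 0 < q) (hn : 0 < n)
    (ε : ℝ) (hε0 : 0 ≤ ε) (hε1 : ε < 1)
    (C : Set (Fin n → Fin q))
    (hdist : ∀ c₁ ∈ C, ∀ c₂ ∈ C, c₁ ≠ c₂ → (1 - ε) * n ≤ (hammingDist c₁ c₂ : ℝ))
    (z : Fin n → Fin q) :
    ({c ∈ C | (hammingDist c z : ℝ) ≤ (1 - Real.sqrt ε) * n}.ncard : ℝ) ≤ 2 * q * n := by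
  classical
  set γ := Real.sqrt ε with hγ
  have hγ0 : 0 ≤ γ := Real.sqrt_nonneg ε
  have hγ2 : γ * γ = ε := Real.mul_self_sqrt hε0
  have hγ1 : γ < 1 := by nlinarith
  set L := {c ∈ C | (hammingDist c z : ℝ) ≤ (1 - γ) * n} with hL
  have hfin : L.Finite := Set.toFinite _
  set F := hfin.toFinset with hF
  have hmemF : ∀ c, c ∈ F ↔ c ∈ C ∧ (hammingDist c z : ℝ) ≤ (1 - γ) * n := by
    intro c; rw [hF, Set.Finite.mem_toFinset]; exact Iff.rfl
  set w : (Fin n → Fin q) → EuclideanSpace ℝ (Fin n × Fin q) :=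
    fun c => phi q n c - γ • phi q n z with hw
  have hphinj : Function.Injective (phi q n) := by
    intro a b hab
    funext i
    have h := congrArg (fun v => v (i, a i)) hab
    by_contra hne
    simp only [phi, PiLp.toLp_apply] at h
    rw [if_pos trivial, if_neg (fun hh : b i = a i => hne hh.symm)] at h
    exact one_ne_zero h
  have hwinj : Function.Injective w := by
    intro a b hab
    apply hphinj
    have : phi q n a - γ • phi q n z = phi q n b - γ • phi q n z := hab
    linear_combination (norm := abel) this
  have hinner : ∀ a b, ⟪w a, w b⟫ = ((n:ℝ) - hammingDist a b)
      - γ * ((n:ℝ) - hammingDist a z) - γ * ((n:ℝ) - hammingDist z b) + γ * γ * n := by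
    intro a b
    simp only [hw, inner_sub_left, inner_sub_right, real_inner_smul_left,
      real_inner_smul_right, inner_phi]
    rw [hammingDist_self]
    push_cast
    ring
  have hnn : (0:ℝ) < n := by exact_mod_cast hn
  have hcard : (F.image w).card ≤ 2 * (n * q) := by
    apply obtuse_card_le (n * q) (EuclideanSpace ℝ (Fin n × Fin q))
    · rw [finrank_euclideanSpace]
      simp
    · intro x hx
      obtain ⟨c, hc, rfl⟩ := Finset.mem_image.mp hx
      rw [hmemF] at hc
      intro h0
      have h1 : ⟪w c, w c⟫ = 0 := by rw [h0]; simp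
      rw [hinner, hammingDist_self, hammingDist_comm z c] at h1
      push_cast at h1
      have hD0 : (0:ℝ) ≤ hammingDist c z := Nat.cast_nonneg _
      have key : (0:ℝ) < (1-γ)*(1-γ)*n := by
        apply mul_pos (mul_pos (by linarith) (by linarith)) hnn
      nlinarith [mul_nonneg hγ0 hD0]
    · intro x hx y hy hxy
      obtain ⟨a, ha, rfl⟩ := Finset.mem_image.mp hx
      obtain ⟨b, hb, rfl⟩ := Finset.mem_image.mp hy
      have hab : a ≠ b := fun h => hxy (by rw [h])
      rw [hmemF] at ha hb
      rw [hinner, hammingDist_comm z b]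
      have hA : (n:ℝ) - hammingDist a b ≤ ε * n := by
        have := hdist a ha.1 b hb.1 hab
        nlinarith
      have h1 : γ * n ≤ (n:ℝ) - hammingDist a z := by nlinarith [ha.2]
      have h2 : γ * n ≤ (n:ℝ) - hammingDist b z := by nlinarith [hb.2]
      nlinarith [mul_le_mul_of_nonneg_left h1 hγ0, mul_le_mul_of_nonneg_left h2 hγ0]
  rw [Finset.card_image_of_injective _ hwinj] at hcard
  have hnc : L.ncard = F.card := Set.ncard_eq_toFinset_card L hfin
  have : (L.ncard : ℝ) ≤ 2 * (n * q) := by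
    rw [hnc]; exact_mod_cast hcard
  calc (L.ncard : ℝ) ≤ 2 * (n*q) := this
    _ = 2 * q * n := by push_cast; ring
end

section
/- Let q, k, n be positive integers and 0 ≤ ε < 1 a real number. Let 𝓗 = {h_1, …, h_n} with h_i : [q]^k → [q] be an ε-almost universal hash family, and define H : [q]^k → [q]^n by H(x) = (h_1(x), …, h_n(x)). Then for every z ∈ [q]^n, the number of messages x ∈ [q]^k with Δ(H(x), z) ≤ (1 − √ε)·n is at most 2qn. Equivalently, for every z ∈ [q]^n there are at most 2qn strings x ∈ [q]^k that agree with z on at least a √ε fraction of the n hash values, i.e., with |{i ∈ [n] : h_i(x) = z_i}| ≥ √ε·n. -/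
open Finset


/-- **List decodability of the code associated to an almost universal hash family.**
If `𝓗 = {h_1, …, h_n}`, `h_i : [q]^k → [q]`, is an `ε`-almost universal hash family with
`0 ≤ ε < 1` and `H(x) = (h_1(x), …, h_n(x))`, then for every `z ∈ [q]^n` the number of
messages `x ∈ [q]^k` with `Δ(H(x), z) ≤ (1 − √ε)·n` (equivalently, agreeing with `z` on at
least `√ε·n` of the hash values) is at most `2qn`. -/
theorem au_list_decodable (q k n : ℕ) (hq : 0 < q) (hk : 0 < k) (hn : 0 < n)
    (ε : ℝ) (hε0 : 0 ≤ ε) (hε1 : ε < 1)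
    (h : Fin n → (Fin k → Fin q) → Fin q)
    (hau : ∀ x y : Fin k → Fin q, x ≠ y →
      ({i : Fin n | h i x = h i y}.ncard : ℝ) ≤ ε * n)
    (z : Fin n → Fin q) :
    ({x : Fin k → Fin q |
        (hammingDist (fun i => h i x) z : ℝ) ≤ (1 - Real.sqrt ε) * n}.ncard : ℝ)
      ≤ 2 * q * n := by
  classical
  set s := Real.sqrt ε with hs_def
  have hs0 : 0 ≤ s := Real.sqrt_nonneg ε
  have hs2 : s ^ 2 = ε := Real.sq_sqrt hε0
  have hs1 : s < 1 := by nlinarith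
  clear_value s
  subst hs2
  have hqpos : (0:ℝ) < q := by exact_mod_cast hq
  have hnpos : (0:ℝ) < n := by exact_mod_cast hn
  have hq1 : (1:ℝ) ≤ q := by exact_mod_cast hq
  have hn1 : (1:ℝ) ≤ n := by exact_mod_cast hn
  -- the list as a Finset
  set S : Finset (Fin k → Fin q) :=
    Finset.univ.filter
      (fun x => (hammingDist (fun i => h i x) z : ℝ) ≤ (1 - s) * n) with hS_def
  have hncard : ({x : Fin k → Fin q |
        (hammingDist (fun i => h i x) z : ℝ) ≤ (1 - s) * n}.ncard : ℝ) = (S.card : ℝ) := by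
    rw [← Set.ncard_coe_finset]; congr 2; ext a; simp [hS_def]
  rw [hncard]
  set M : ℝ := (S.card : ℝ) with hM_def
  clear_value M
  have hM0 : 0 ≤ M := by rw [hM_def]; exact Nat.cast_nonneg _
  -- agreement counts
  set A : (Fin n → Fin q) → (Fin n → Fin q) → ℝ :=
    fun f g => ((Finset.univ.filter fun i => f i = g i).card : ℝ) with hA_def
  have hAzz : A z z = n := by simp [hA_def]
  have hAsymm : ∀ f g, A f g = A g f := by
    intro f g; simp only [hA_def]; congr 2; ext i; simp [eq_comm]
  have hAself : ∀ f, A f f = n := by intro f; simp [hA_def]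
  have hAnonneg : ∀ f g, 0 ≤ A f g := fun f g => Nat.cast_nonneg _
  -- collision bound from hau
  have hcol : ∀ x y : Fin k → Fin q, x ≠ y →
      A (fun i => h i x) (fun i => h i y) ≤ s^2 * n := by
    intro x y hxy
    have := hau x y hxy
    rwa [show {i : Fin n | h i x = h i y}
        = ↑(Finset.univ.filter fun i => h i x = h i y) by ext i; simp,
      Set.ncard_coe_finset] at this
  -- agreement lower bound for members of S
  have hagr : ∀ x ∈ S, s * n ≤ A (fun i => h i x) z := by
    intro x hx
    have hx' : (hammingDist (fun i => h i x) z : ℝ) ≤ (1 - s) * n := by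
      simpa [hS_def] using hx
    have hsum : (Finset.univ.filter fun i => h i x = z i).card
        + hammingDist (fun i => h i x) z = n := by
      have := Finset.card_filter_add_card_filter_not (s := (Finset.univ : Finset (Fin n)))
        (p := fun i => h i x = z i)
      simpa [hammingDist] using this
    have : (A (fun i => h i x) z) + (hammingDist (fun i => h i x) z : ℝ) = n := by
      simp only [hA_def]; exact_mod_cast hsum
    nlinarith
  -- case A : radius below 1
  by_cases hcase : (1 - s) * n < 1
  · -- every member maps exactly to z; at most one by injectivity
    have hexact : ∀ x ∈ S, (fun i => h i x) = z := by
      intro x hx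
      have hx' : (hammingDist (fun i => h i x) z : ℝ) ≤ (1 - s) * n := by
        simpa [hS_def] using hx
      have : hammingDist (fun i => h i x) z = 0 := by
        by_contra hne
        have h1 : (1:ℝ) ≤ (hammingDist (fun i => h i x) z : ℝ) := by
          exact_mod_cast Nat.one_le_iff_ne_zero.mpr hne
        linarith
      exact hammingDist_eq_zero.mp this
    have hcard1 : S.card ≤ 1 := by
      apply Finset.card_le_one.mpr
      intro a ha b hb
      by_contra hab
      have hA : A (fun i => h i a) (fun i => h i b) = n := by
        have : ∀ i, h i a = h i b := by
          intro i
          have ha' := congrFun (hexact a ha) i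
          have hb' := congrFun (hexact b hb) i
          rw [ha', hb']
        simp [hA_def, this]
      have := hcol a b hab
      rw [hA] at this
      nlinarith
    have : M ≤ 1 := by rw [hM_def]; exact_mod_cast hcard1
    nlinarith
  push_neg at hcase
  -- case B : main Johnson-type bound, with a q-rescaled simplex embedding
  set χ : Fin q → Fin q → ℝ := fun b a => q * (if b = a then (1:ℝ) else 0) - 1 with hχ_def
  set u : (Fin k → Fin q) → (Fin n × Fin q) → ℝ :=
    fun x p => χ (h p.1 x) p.2 - s * χ (z p.1) p.2 with hu_def
  -- key inner product computation
  have key : ∀ f g : Fin n → Fin q,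
      (∑ p : Fin n × Fin q, χ (f p.1) p.2 * χ (g p.1) p.2)
        = (q:ℝ)^2 * A f g - n * q := by
    intro f g
    rw [Fintype.sum_prod_type]
    have inner : ∀ i : Fin n,
        (∑ a : Fin q, χ (f i) a * χ (g i) a)
          = (q:ℝ)^2 * (if f i = g i then (1:ℝ) else 0) - q := by
      intro i
      have expand : ∀ a : Fin q, χ (f i) a * χ (g i) a
          = (q:ℝ)^2 * ((if f i = a then (1:ℝ) else 0) * (if g i = a then (1:ℝ) else 0))
            - (q:ℝ) * (if f i = a then (1:ℝ) else 0)
            - (q:ℝ) * (if g i = a then (1:ℝ) else 0) + 1 := by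
        intro a; simp only [hχ_def]; ring
      simp_rw [expand]
      have e1 : (∑ a : Fin q, (if f i = a then (1:ℝ) else 0) * (if g i = a then (1:ℝ) else 0))
          = if f i = g i then 1 else 0 := by
        rw [Finset.sum_eq_single (g i)]
        · simp [eq_comm]
        · intro b _ hb; simp [Ne.symm hb]
        · simp
      have e2 : (∑ a : Fin q, (if f i = a then (1:ℝ) else 0)) = 1 := by simp
      have e3 : (∑ a : Fin q, (if g i = a then (1:ℝ) else 0)) = 1 := by simp
      rw [Finset.sum_add_distrib, Finset.sum_sub_distrib, Finset.sum_sub_distrib,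
        ← Finset.mul_sum, ← Finset.mul_sum, ← Finset.mul_sum, e1, e2, e3]
      simp
    simp_rw [inner]
    rw [Finset.sum_sub_distrib, ← Finset.mul_sum, Finset.sum_boole, Finset.sum_const]
    simp [hA_def, Finset.card_univ, mul_comm]
  -- inner products of the u vectors
  have ipu : ∀ x y : Fin k → Fin q,
      (∑ p : Fin n × Fin q, u x p * u y p)
        = ((q:ℝ)^2 * A (fun i => h i x) (fun i => h i y) - n * q)
          - s * ((q:ℝ)^2 * A (fun i => h i x) z - n * q)
          - s * ((q:ℝ)^2 * A z (fun i => h i y) - n * q)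
          + s^2 * ((q:ℝ)^2 * A z z - n * q) := by
    intro x y
    have expand : ∀ p : Fin n × Fin q, u x p * u y p
        = χ (h p.1 x) p.2 * χ (h p.1 y) p.2
          - s * (χ (h p.1 x) p.2 * χ (z p.1) p.2)
          - s * (χ (z p.1) p.2 * χ (h p.1 y) p.2)
          + s^2 * (χ (z p.1) p.2 * χ (z p.1) p.2) := by
      intro p; simp only [hu_def]; ring
    simp_rw [expand]
    rw [Finset.sum_add_distrib, Finset.sum_sub_distrib, Finset.sum_sub_distrib,
      ← Finset.mul_sum, ← Finset.mul_sum, ← Finset.mul_sum,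
      key (fun i => h i x) (fun i => h i y), key (fun i => h i x) z,
      key z (fun i => h i y), key z z]
  -- bounds
  set D : ℝ := (q:ℝ)^2 * (n * (1 - s^2)) - q * (n * (1 - s)^2) with hD_def
  set B : ℝ := -((q:ℝ) * (n * (1 - s)^2)) with hB_def
  clear_value D B
  have hipbound : ∀ x ∈ S, ∀ y ∈ S,
      (∑ p : Fin n × Fin q, u x p * u y p) ≤ if x = y then D else B := by
    intro x hx y hy
    rw [ipu x y, hAzz]
    have hax := hagr x hx
    have hay := hagr y hy
    have hay' : s * n ≤ A z (fun i => h i y) := by rw [hAsymm]; exact hay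
    by_cases hxy : x = y
    · subst hxy
      rw [if_pos rfl, hAself, hD_def]
      have hArw : A z (fun i => h i x) = A (fun i => h i x) z := hAsymm _ _
      rw [hArw]
      generalize A (fun i => h i x) z = a at hax ⊢
      linarith [mul_nonneg (mul_nonneg hs0 (sub_nonneg.mpr hax)) (sq_nonneg (q:ℝ)),
        sq_nonneg ((q:ℝ) - q*s)]
    · rw [if_neg hxy, hB_def]
      have hcxy := hcol x y hxy
      generalize A (fun i => h i x) (fun i => h i y) = c at hcxy ⊢
      generalize A (fun i => h i x) z = a at hax ⊢
      generalize A z (fun i => h i y) = b at hay' ⊢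
      linarith [mul_nonneg (mul_nonneg hs0 (sub_nonneg.mpr hax)) (sq_nonneg (q:ℝ)),
        mul_nonneg (mul_nonneg hs0 (sub_nonneg.mpr hay')) (sq_nonneg (q:ℝ)),
        mul_nonneg (sub_nonneg.mpr hcxy) (sq_nonneg (q:ℝ))]
  -- double counting
  have hnonneg : (0:ℝ) ≤ ∑ p : Fin n × Fin q, (∑ x ∈ S, u x p)^2 :=
    Finset.sum_nonneg fun p _ => sq_nonneg _
  have hswap : (∑ p : Fin n × Fin q, (∑ x ∈ S, u x p)^2)
      = ∑ x ∈ S, ∑ y ∈ S, ∑ p : Fin n × Fin q, u x p * u y p := by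
    simp_rw [sq, Finset.sum_mul_sum]
    rw [Finset.sum_comm]
    congr 1; ext x
    rw [Finset.sum_comm]
  have hsum_bound : (∑ x ∈ S, ∑ y ∈ S, ∑ p : Fin n × Fin q, u x p * u y p)
      ≤ M * D + M * (M - 1) * B := by
    have step1 : ∀ x ∈ S, (∑ y ∈ S, ∑ p : Fin n × Fin q, u x p * u y p)
        ≤ D + (M - 1) * B := by
      intro x hx
      calc (∑ y ∈ S, ∑ p : Fin n × Fin q, u x p * u y p)
          ≤ ∑ y ∈ S, (if x = y then D else B) :=
            Finset.sum_le_sum fun y hy => hipbound x hx y hy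
        _ = D + (M - 1) * B := by
            have hsplit : ∀ y : Fin k → Fin q, (if x = y then D else B)
                = B + (if x = y then D - B else 0) := by
              intro y; split_ifs <;> ring
            simp_rw [hsplit]
            rw [Finset.sum_add_distrib, Finset.sum_const, Finset.sum_ite_eq]
            simp [hx, hM_def]
            ring
    calc (∑ x ∈ S, ∑ y ∈ S, ∑ p : Fin n × Fin q, u x p * u y p)
        ≤ ∑ _x ∈ S, (D + (M - 1) * B) := Finset.sum_le_sum step1
      _ = M * (D + (M - 1) * B) := by rw [Finset.sum_const, hM_def]; ring
      _ = M * D + M * (M - 1) * B := by ring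
  have hmain : (0:ℝ) ≤ M * D + M * (M - 1) * B := le_trans hnonneg (hswap ▸ hsum_bound)
  clear hnonneg hswap hsum_bound hipbound ipu key hcol hagr hau hncard
  clear hS_def hA_def hχ_def hu_def hAzz hAsymm hAself hAnonneg hM_def
  clear u χ A S
  -- extract M * (1 - s) ≤ 2 * q
  rcases eq_or_lt_of_le hM0 with hM0' | hMpos
  · rw [← hM0']; positivity
  have hqn : (0:ℝ) < q * n := mul_pos hqpos hnpos
  have hfactor : M * D + M * (M - 1) * B
      = (q * n) * (M * (q * (1 - s^2)) - M * M * (1 - s)^2) := by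
    rw [hD_def, hB_def]; ring
  have h3 : (q*n) * (M * M * (1 - s)^2) ≤ (q*n) * (M * (q * (1 - s^2))) := by
    rw [hfactor] at hmain; linarith [hmain]
  have h4 : M * (M * (1 - s)^2) ≤ M * (q * (1 - s^2)) := by
    have h3' := le_of_mul_le_mul_left h3 hqn
    linarith [h3']
  have h5 : M * (1 - s)^2 ≤ q * (1 - s^2) := le_of_mul_le_mul_left h4 hMpos
  have hMs : M * (1 - s) ≤ 2 * q := by
    have hpos : (0:ℝ) < 1 - s := by linarith
    have h6 : (M * (1 - s)) * (1 - s) ≤ (q * (1 + s)) * (1 - s) := by linarith [h5]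
    have h7 : M * (1 - s) ≤ q * (1 + s) := le_of_mul_le_mul_right h6 hpos
    have h8 : (0:ℝ) ≤ q * (1 - s) := mul_nonneg hqpos.le (by linarith)
    linarith [h7, h8]
  -- conclude using (1-s)*n ≥ 1
  linarith [mul_le_mul_of_nonneg_right hMs hnpos.le,
    mul_le_mul_of_nonneg_left hcase hM0]
end

section
/- (List decodability of the full Reed-Solomon code.) Let q be a prime power, F_q the finite field with q elements, 1 ≤ k ≤ q, and ε > 0 a real number with k − 1 ≤ ε²·q. For x ∈ F_q^k let P_x(Y) = x_0 + x_1·Y + ⋯ + x_{k−1}·Y^{k−1}. Then for every function z : F_q → F_q, the number of messages x ∈ F_q^k such that |{β ∈ F_q : P_x(β) = z(β)}| ≥ ε·q is at most 2q². In other words, the Reed–Solomon code x ↦ (P_x(β))_{β ∈ F_q} is (1 − ε, 2q²)-list decodable. -/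
open Finset

private lemma rs_quad {ι κ : Type*} (s : Finset ι) (t : Finset κ) (v : ι → κ → ℝ) :
    ∑ j ∈ t, (∑ i ∈ s, v i j) ^ 2 = ∑ i ∈ s, ∑ i' ∈ s, ∑ j ∈ t, v i j * v i' j := by
  simp only [sq, Finset.sum_mul_sum]
  rw [Finset.sum_comm]
  exact Finset.sum_congr rfl fun i _ => Finset.sum_comm

/-- Core fact: unit vectors in `ℝ^α` with pairwise non-positive
inner products number at most `2·|α|`. -/
private lemma rs_pairwise_nonpos_card_le {ι α : Type*} [Fintype α] [DecidableEq ι]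
    (A : Finset ι) (u : ι → α → ℝ)
    (hnorm : ∀ x ∈ A, ∑ p, u x p ^ 2 = 1)
    (hneg : ∀ x ∈ A, ∀ y ∈ A, x ≠ y → ∑ p, u x p * u y p ≤ 0) :
    (A.card : ℝ) ≤ 2 * Fintype.card α := by
  classical
  set c : ι → ι → ℝ := fun x y => ∑ p, u x p * u y p with hc
  have hcxx : ∀ x ∈ A, c x x = 1 := by
    intro x hx
    simp only [hc, ← sq]
    exact hnorm x hx
  have hcs : ∀ x ∈ A, ∀ y ∈ A, c x y ^ 2 ≤ 1 := by
    intro x hx y hy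
    calc c x y ^ 2 ≤ (∑ p, u x p ^ 2) * ∑ p, u y p ^ 2 :=
          Finset.sum_mul_sq_le_sq_mul_sq _ _ _
      _ = 1 := by rw [hnorm x hx, hnorm y hy, one_mul]
  have key1 : ∑ p : α, ∑ x ∈ A, u x p ^ 2 = (A.card : ℝ) := by
    rw [Finset.sum_comm]
    simp only [Finset.sum_congr rfl hnorm]
    simp
  -- identity B
  have idB : ∑ p : α, ∑ p' : α, (∑ x ∈ A, u x p * u x p') ^ 2
      = ∑ x ∈ A, ∑ y ∈ A, c x y ^ 2 := by
    have := rs_quad A (univ : Finset (α × α)) (fun x P => u x P.1 * u x P.2)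
    rw [Fintype.sum_prod_type] at this
    rw [this]
    refine Finset.sum_congr rfl fun x _ => Finset.sum_congr rfl fun y _ => ?_
    rw [hc, sq, Finset.sum_mul_sum, Fintype.sum_prod_type]
    exact Finset.sum_congr rfl fun p _ => Finset.sum_congr rfl fun p' _ => by ring
  -- identity C
  have idC : (0:ℝ) ≤ ∑ x ∈ A, ∑ y ∈ A, c x y := by
    have := rs_quad A (univ : Finset α) u
    simp only [hc, ← this]
    exact Finset.sum_nonneg fun p _ => sq_nonneg _
  -- bound on sum of squares of correlations
  have hbound : ∑ x ∈ A, ∑ y ∈ A, c x y ^ 2 ≤ 2 * A.card := by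
    have step : ∀ x ∈ A, ∀ y ∈ A, c x y ^ 2 ≤ 2 * (if x = y then 1 else 0) - c x y := by
      intro x hx y hy
      by_cases h : x = y
      · subst h; rw [hcxx x hx]; norm_num
      · have h1 : c x y ≤ 0 := hneg x hx y hy h
        have h2 : c x y ^ 2 ≤ 1 := hcs x hx y hy
        have h3 : -1 ≤ c x y := by nlinarith
        simp only [h, if_false]
        nlinarith
    calc ∑ x ∈ A, ∑ y ∈ A, c x y ^ 2
        ≤ ∑ x ∈ A, ∑ y ∈ A, (2 * (if x = y then 1 else 0) - c x y) := by
          exact Finset.sum_le_sum fun x hx => Finset.sum_le_sum fun y hy => step x hx y hy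
      _ ≤ 2 * A.card := by
          simp only [Finset.sum_sub_distrib, ← Finset.mul_sum]
          have hd : ∀ x ∈ A, ∑ y ∈ A, (if x = y then (1:ℝ) else 0) = 1 := by
            intro x hx
            rw [Finset.sum_ite_eq A x (fun _ => (1:ℝ))]
            simp [hx]
          rw [Finset.sum_congr rfl hd]
          simp only [Finset.sum_const, nsmul_eq_mul]
          linarith [idC]
  -- Cauchy–Schwarz on the diagonal
  have hdiag : ((A.card : ℝ)) ^ 2 ≤ (Fintype.card α : ℝ) * ∑ p : α, (∑ x ∈ A, u x p ^ 2) ^ 2 := by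
    have := sq_sum_le_card_mul_sum_sq (s := (univ : Finset α))
      (f := fun p => ∑ x ∈ A, u x p ^ 2)
    rw [key1] at this
    simpa using this
  have hoffd : ∑ p : α, (∑ x ∈ A, u x p ^ 2) ^ 2
      ≤ ∑ p : α, ∑ p' : α, (∑ x ∈ A, u x p * u x p') ^ 2 := by
    refine Finset.sum_le_sum fun p _ => ?_
    have : ((∑ x ∈ A, u x p * u x p) ^ 2) ≤ ∑ p' : α, (∑ x ∈ A, u x p * u x p') ^ 2 :=
      Finset.single_le_sum (f := fun p' => (∑ x ∈ A, u x p * u x p') ^ 2)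
        (fun _ _ => sq_nonneg _) (Finset.mem_univ p)
    simpa [← sq] using this
  have final : ((A.card : ℝ)) ^ 2 ≤ (Fintype.card α : ℝ) * (2 * A.card) := by
    calc ((A.card : ℝ)) ^ 2 ≤ (Fintype.card α : ℝ) * ∑ p : α, (∑ x ∈ A, u x p ^ 2) ^ 2 := hdiag
      _ ≤ (Fintype.card α : ℝ) * ∑ p : α, ∑ p' : α, (∑ x ∈ A, u x p * u x p') ^ 2 := by
          exact mul_le_mul_of_nonneg_left hoffd (by positivity)
      _ = (Fintype.card α : ℝ) * ∑ x ∈ A, ∑ y ∈ A, c x y ^ 2 := by rw [idB]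
      _ ≤ (Fintype.card α : ℝ) * (2 * A.card) := mul_le_mul_of_nonneg_left hbound (by positivity)
  rcases Nat.eq_zero_or_pos A.card with h0 | h0
  · rw [h0]
    push_cast
    positivity
  · have hL : (0:ℝ) < A.card := by exact_mod_cast h0
    nlinarith

open Finset Polynomial

private lemma rs_agree_card_le {F : Type*} [Field F] [Fintype F] [DecidableEq F]
    {k : ℕ} (x y : Fin k → F) (hxy : x ≠ y) :
    ((univ.filter fun β : F => ∑ i, x i * β ^ (i : ℕ) = ∑ i, y i * β ^ (i : ℕ)).card : ℝ)
      ≤ (k : ℝ) - 1 := by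
  classical
  obtain ⟨j, hj⟩ := Function.ne_iff.mp hxy
  set p : Polynomial F := ∑ i : Fin k, Polynomial.C (x i - y i) * Polynomial.X ^ (i : ℕ) with hp
  have hp0 : p ≠ 0 := by
    intro h
    have hcoeff : p.coeff (j : ℕ) = x j - y j := by
      rw [hp, Polynomial.finset_sum_coeff]
      rw [Finset.sum_eq_single j]
      · rw [Polynomial.coeff_C_mul, Polynomial.coeff_X_pow, if_pos rfl, mul_one]
      · intro i _ hij
        rw [Polynomial.coeff_C_mul, Polynomial.coeff_X_pow,
          if_neg (fun h => hij (Fin.val_injective h).symm), mul_zero]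
      · simp
    rw [h] at hcoeff
    simp at hcoeff
    exact hj (sub_eq_zero.mp hcoeff.symm)
  have hdeg : p.natDegree ≤ k - 1 := by
    apply Polynomial.natDegree_sum_le_of_forall_le
    intro i _
    exact le_trans (Polynomial.natDegree_C_mul_X_pow_le _ _) (Nat.le_sub_one_of_lt i.2)
  have hsub : (univ.filter fun β : F => ∑ i, x i * β ^ (i : ℕ) = ∑ i, y i * β ^ (i : ℕ))
      ⊆ p.roots.toFinset := by
    intro β hβ
    rw [Finset.mem_filter] at hβ
    rw [Multiset.mem_toFinset, Polynomial.mem_roots hp0]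
    show p.eval β = 0
    rw [hp, Polynomial.eval_finset_sum]
    simp only [Polynomial.eval_mul, Polynomial.eval_C, Polynomial.eval_pow, Polynomial.eval_X,
      sub_mul]
    rw [Finset.sum_sub_distrib]
    rw [sub_eq_zero]
    exact hβ.2
  have hcard : (univ.filter fun β : F => ∑ i, x i * β ^ (i : ℕ)
      = ∑ i, y i * β ^ (i : ℕ)).card ≤ k - 1 := by
    calc _ ≤ p.roots.toFinset.card := Finset.card_le_card hsub
      _ ≤ Multiset.card p.roots := Multiset.toFinset_card_le _
      _ ≤ p.natDegree := Polynomial.card_roots' p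
      _ ≤ k - 1 := hdeg
  have hk1 : 1 ≤ k := by
    rcases Nat.eq_zero_or_pos k with h | h
    · subst h; exact absurd (Subsingleton.elim x y) hxy
    · exact h
  calc ((univ.filter fun β : F => ∑ i, x i * β ^ (i : ℕ)
      = ∑ i, y i * β ^ (i : ℕ)).card : ℝ) ≤ ((k - 1 : ℕ) : ℝ) := by exact_mod_cast hcard
    _ = (k : ℝ) - 1 := by
        rw [Nat.cast_sub hk1]; norm_num

private lemma rs_dot {F : Type*} [Fintype F] [DecidableEq F] (f g : F → F) :
    ∑ p : F × F, (if f p.1 = p.2 then (1:ℝ) else 0) * (if g p.1 = p.2 then 1 else 0)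
      = ((univ.filter fun β => f β = g β).card : ℝ) := by
  rw [Fintype.sum_prod_type]
  have h1 : ∀ β : F, (∑ γ : F, (if f β = γ then (1:ℝ) else 0) * (if g β = γ then 1 else 0))
      = if f β = g β then 1 else 0 := by
    intro β
    rw [Finset.sum_eq_single (f β)]
    · by_cases h : f β = g β <;> simp [h, eq_comm]
    · intro γ _ hγ
      have : f β ≠ γ := fun h => hγ h.symm
      simp [this]
    · simp
  rw [Finset.sum_congr rfl fun β _ => h1 β]
  rw [Finset.sum_boole]

/-- **List decodability of the full Reed–Solomon code (via the Johnson bound).**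
Let `F` be a finite field with `q` elements, `1 ≤ k ≤ q`, and `ε > 0` with
`k − 1 ≤ ε²·q`.  For `x ∈ F^k` let `P_x(Y) = ∑ i, x_i·Y^i`.  Then for every received
word `z : F → F`, the number of messages `x` whose codeword `(P_x(β))_{β ∈ F}` agrees
with `z` on at least `ε·q` positions is at most `2q²`; i.e. the Reed–Solomon code is
`(1 − ε, 2q²)`-list decodable. -/
theorem reed_solomon_list_decodable (F : Type*) [Field F] [Fintype F] [DecidableEq F]
    (k : ℕ) (hk1 : 1 ≤ k) (hkq : k ≤ Fintype.card F)
    (ε : ℝ) (hε : 0 < ε) (hkε : (k : ℝ) - 1 ≤ ε ^ 2 * Fintype.card F)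
    (z : F → F) :
    ({x : Fin k → F |
        ε * Fintype.card F ≤ ({β : F | ∑ i, x i * β ^ (i : ℕ) = z β}.ncard : ℝ)}.ncard : ℝ)
      ≤ 2 * (Fintype.card F : ℝ) ^ 2 := by
  classical
  have hq0 : 0 < (Fintype.card F : ℝ) := by exact_mod_cast Fintype.card_pos
  have hinner : ∀ x : Fin k → F, {β : F | ∑ i, x i * β ^ (i : ℕ) = z β}.ncard
      = (univ.filter fun β : F => ∑ i, x i * β ^ (i : ℕ) = z β).card := by
    intro x
    rw [Set.ncard_eq_toFinset_card', Set.toFinset_setOf]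
  simp only [hinner]
  rw [Set.ncard_eq_toFinset_card', Set.toFinset_setOf]
  set q : ℝ := (Fintype.card F : ℝ) with hqdef
  set t : (Fin k → F) → ℝ :=
    fun x => ((univ.filter fun β : F => ∑ i, x i * β ^ (i : ℕ) = z β).card : ℝ) with ht
  set A : Finset (Fin k → F) := univ.filter fun x => ε * q ≤ t x with hAdef
  have hA : ∀ x ∈ A, ε * q ≤ t x := by
    intro x hx
    exact (Finset.mem_filter.mp hx).2
  have hq1 : (1:ℝ) ≤ q := by
    rw [hqdef]
    exact_mod_cast Fintype.card_pos
  have htle : ∀ x : Fin k → F, t x ≤ q := by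
    intro x
    show ((univ.filter fun β : F => ∑ i, x i * β ^ (i : ℕ) = z β).card : ℝ)
      ≤ ((Fintype.card F : ℕ) : ℝ)
    have h := Finset.card_filter_le univ (fun β : F => ∑ i, x i * β ^ (i : ℕ) = z β)
    rw [Finset.card_univ] at h
    exact_mod_cast h
  have ht0 : ∀ x : Fin k → F, 0 ≤ t x := by
    intro x
    rw [ht]
    positivity
  have hagr_self : ∀ x : Fin k → F,
      ((univ.filter fun β : F => ∑ i, x i * β ^ (i : ℕ) = ∑ i, x i * β ^ (i : ℕ)).card : ℝ)
        = q := by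
    intro x
    rw [Finset.filter_true_of_mem fun β _ => rfl, Finset.card_univ, hqdef]
  -- agreement on all of F pins down the message
  have hfull : ∀ x y : Fin k → F, (∀ β : F, ∑ i, x i * β ^ (i : ℕ) = z β) →
      (∀ β : F, ∑ i, y i * β ^ (i : ℕ) = z β) → x = y := by
    intro x y hx hy
    by_contra hxy
    have h1 := rs_agree_card_le x y hxy
    rw [Finset.filter_true_of_mem (fun β _ => by rw [hx β, hy β]), Finset.card_univ] at h1
    have h2 : (k : ℝ) ≤ q := by rw [hqdef]; exact_mod_cast hkq
    rw [← hqdef] at h1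
    linarith
  by_cases hε1 : 1 ≤ ε
  · -- degenerate case `ε ≥ 1`: the list has at most one element
    have hcard1 : A.card ≤ 1 := by
      rw [Finset.card_le_one]
      intro x hx y hy
      have hfx : ∀ w' : Fin k → F, w' ∈ A → ∀ β : F, ∑ i, w' i * β ^ (i : ℕ) = z β := by
        intro w' hw' β
        have h2 := hA w' hw'
        have h3 : q ≤ t w' := le_trans (by nlinarith) h2
        have h4 : t w' = q := le_antisymm (htle w') h3
        have h5 : (univ.filter fun β : F => ∑ i, w' i * β ^ (i : ℕ) = z β).card
            = Fintype.card F := by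
          have h4x : ((univ.filter fun β : F => ∑ i, w' i * β ^ (i : ℕ) = z β).card : ℝ)
              = ((Fintype.card F : ℕ) : ℝ) := h4
          exact_mod_cast h4x
        have h6 : (univ.filter fun β : F => ∑ i, w' i * β ^ (i : ℕ) = z β) = univ := by
          apply Finset.eq_univ_of_card
          rw [h5]
        have := Finset.mem_univ β
        rw [← h6, Finset.mem_filter] at this
        exact this.2
      exact hfull x y (hfx x hx) (hfx y hy)
    calc (A.card : ℝ) ≤ 1 := by exact_mod_cast hcard1
      _ ≤ 2 * q ^ 2 := by nlinarith [hq1]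
  · push_neg at hε1
    -- main case: Johnson-bound argument via pairwise non-positively correlated unit vectors
    set s : (Fin k → F) → ℝ := fun x => (1 + ε ^ 2) * q - 2 * ε * t x with hs
    have hspos : ∀ x : Fin k → F, 0 < s x := by
      intro x
      have h1 : ε * t x ≤ ε * q := mul_le_mul_of_nonneg_left (htle x) hε.le
      have hε2 : 0 < 1 - ε := by linarith
      have h2 : 0 < (1 - ε) ^ 2 * q := by positivity
      show 0 < (1 + ε ^ 2) * q - 2 * ε * t x
      nlinarith
    set u : (Fin k → F) → F × F → ℝ := fun x p =>
      ((if ∑ i, x i * p.1 ^ (i : ℕ) = p.2 then (1 : ℝ) else 0)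
        - ε * (if z p.1 = p.2 then 1 else 0)) / Real.sqrt (s x) with hu
    have hdot : ∀ x y : Fin k → F,
        ∑ p : F × F, ((if ∑ i, x i * p.1 ^ (i : ℕ) = p.2 then (1 : ℝ) else 0)
            - ε * (if z p.1 = p.2 then 1 else 0))
          * ((if ∑ i, y i * p.1 ^ (i : ℕ) = p.2 then (1 : ℝ) else 0)
            - ε * (if z p.1 = p.2 then 1 else 0))
        = ((univ.filter fun β : F =>
              ∑ i, x i * β ^ (i : ℕ) = ∑ i, y i * β ^ (i : ℕ)).card : ℝ)
          - ε * t x - ε * t y + ε ^ 2 * q := by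
      intro x y
      have e : ∀ p : F × F,
          ((if ∑ i, x i * p.1 ^ (i : ℕ) = p.2 then (1 : ℝ) else 0)
            - ε * (if z p.1 = p.2 then 1 else 0))
          * ((if ∑ i, y i * p.1 ^ (i : ℕ) = p.2 then (1 : ℝ) else 0)
            - ε * (if z p.1 = p.2 then 1 else 0))
          = (if ∑ i, x i * p.1 ^ (i : ℕ) = p.2 then (1 : ℝ) else 0)
              * (if ∑ i, y i * p.1 ^ (i : ℕ) = p.2 then 1 else 0)
            - ε * ((if ∑ i, x i * p.1 ^ (i : ℕ) = p.2 then (1 : ℝ) else 0)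
              * (if z p.1 = p.2 then 1 else 0))
            - ε * ((if ∑ i, y i * p.1 ^ (i : ℕ) = p.2 then (1 : ℝ) else 0)
              * (if z p.1 = p.2 then 1 else 0))
            + ε ^ 2 * ((if z p.1 = p.2 then (1 : ℝ) else 0)
              * (if z p.1 = p.2 then 1 else 0)) := by
        intro p
        ring
      rw [Finset.sum_congr rfl fun p _ => e p]
      rw [Finset.sum_add_distrib, Finset.sum_sub_distrib, Finset.sum_sub_distrib,
        ← Finset.mul_sum, ← Finset.mul_sum, ← Finset.mul_sum]
      rw [rs_dot (fun β => ∑ i, x i * β ^ (i : ℕ)) (fun β => ∑ i, y i * β ^ (i : ℕ)),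
        rs_dot (fun β => ∑ i, x i * β ^ (i : ℕ)) z,
        rs_dot (fun β => ∑ i, y i * β ^ (i : ℕ)) z,
        rs_dot z z]
      rw [Finset.filter_true_of_mem (fun β (_ : β ∈ univ) => rfl), Finset.card_univ]
    have hnorm : ∀ x ∈ A, ∑ p : F × F, u x p ^ 2 = 1 := by
      intro x hx
      have e : ∀ p : F × F, u x p ^ 2
          = ((if ∑ i, x i * p.1 ^ (i : ℕ) = p.2 then (1 : ℝ) else 0)
            - ε * (if z p.1 = p.2 then 1 else 0))
          * ((if ∑ i, x i * p.1 ^ (i : ℕ) = p.2 then (1 : ℝ) else 0)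
            - ε * (if z p.1 = p.2 then 1 else 0)) / s x := by
        intro p
        rw [hu]
        rw [div_pow, Real.sq_sqrt (hspos x).le, sq]
      rw [Finset.sum_congr rfl fun p _ => e p, ← Finset.sum_div, hdot x x, hagr_self x]
      have hnum : q - ε * t x - ε * t x + ε ^ 2 * q = s x := by rw [hs]; ring
      rw [hnum, div_self (hspos x).ne']
    have hneg : ∀ x ∈ A, ∀ y ∈ A, x ≠ y → ∑ p : F × F, u x p * u y p ≤ 0 := by
      intro x hx y hy hxy
      have e : ∀ p : F × F, u x p * u y p
          = ((if ∑ i, x i * p.1 ^ (i : ℕ) = p.2 then (1 : ℝ) else 0)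
            - ε * (if z p.1 = p.2 then 1 else 0))
          * ((if ∑ i, y i * p.1 ^ (i : ℕ) = p.2 then (1 : ℝ) else 0)
            - ε * (if z p.1 = p.2 then 1 else 0))
          / (Real.sqrt (s x) * Real.sqrt (s y)) := by
        intro p
        rw [hu]
        rw [div_mul_div_comm]
      rw [Finset.sum_congr rfl fun p _ => e p, ← Finset.sum_div, hdot x y]
      apply div_nonpos_of_nonpos_of_nonneg
      · have h1 := rs_agree_card_le x y hxy
        have h2 : ε * (ε * q) ≤ ε * t x := mul_le_mul_of_nonneg_left (hA x hx) hε.le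
        have h3 : ε * (ε * q) ≤ ε * t y := mul_le_mul_of_nonneg_left (hA y hy) hε.le
        nlinarith
      · positivity
    have hmain := rs_pairwise_nonpos_card_le A u hnorm hneg
    rw [Fintype.card_prod] at hmain
    calc (A.card : ℝ) ≤ 2 * (Fintype.card F * Fintype.card F : ℕ) := hmain
      _ = 2 * q ^ 2 := by rw [hqdef]; push_cast; ring
end

section
/- (List decodability of the CRT code.) Let p_1 < p_2 < ⋯ < p_n denote the first n primes and let 1 ≤ k ≤ n. Consider the Chinese Remainder Theorem code mapping each integer x ∈ {0, 1, …, p_1⋯p_k − 1} to the vector (x mod p_1, …, x mod p_n). Then for every vector z with z_i ∈ {0, …, p_i − 1} for each i, the number of integers x ∈ {0, 1, …, p_1⋯p_k − 1} such that |{i ∈ [n] : x ≡ z_i (mod p_i)}| ≥ √((k−1)·n) is at most 2·(p_1 + p_2 + ⋯ + p_n). Equivalently, the CRT code is (1 − √((k−1)/n), 2·∑_{i=1}^n p_i)-list decodable. -/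
set_option maxHeartbeats 1000000

open Finset Module

local notation "⟪" x ", " y "⟫" => @inner ℝ _ _ x y

/-- At most `2 * D` nonzero vectors with pairwise nonpositive inner products in a
real inner product space of dimension `D`. -/
theorem card_le_two_mul_finrank_of_inner_nonpos :
    ∀ (D : ℕ) (E : Type) [NormedAddCommGroup E] [InnerProductSpace ℝ E],
    ∀ (_ : FiniteDimensional ℝ E) (_ : finrank ℝ E = D)
      (s : Finset E), (∀ v ∈ s, v ≠ 0) →
      (∀ v ∈ s, ∀ w ∈ s, v ≠ w → ⟪v, w⟫ ≤ 0) → s.card ≤ 2 * D := by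
  intro D
  induction D using Nat.strong_induction_on with
  | _ D ih =>
    intro E _ _ hfd hD s hs0 hsip
    classical
    rcases s.eq_empty_or_nonempty with rfl | ⟨v, hv⟩
    · simp
    have hv0 : v ≠ 0 := hs0 v hv
    haveI : Nontrivial E := ⟨v, 0, hv0⟩
    have hD1 : 1 ≤ D := by rw [← hD]; exact Module.finrank_pos
    set K : Submodule ℝ E := (ℝ ∙ v)ᗮ with hKdef
    have hK : finrank ℝ K = D - 1 := by
      have h1 : finrank ℝ (ℝ ∙ v) = 1 := finrank_span_singleton hv0
      have h2 := Submodule.finrank_add_finrank_orthogonal (K := (ℝ ∙ v)) (𝕜 := ℝ) (E := E)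
      rw [← hKdef] at h2
      omega
    have hvv : 0 < ⟪v, v⟫ := by
      rcases (real_inner_self_nonneg (x := v)).lt_or_eq with h | h
      · exact h
      · exact absurd (real_inner_self_nonpos.mp h.ge) hv0
    have horth : Kᗮ = (ℝ ∙ v) := by
      rw [hKdef]; exact Submodule.orthogonal_orthogonal _
    set P := K.orthogonalProjectionOnto with hP
    have hPzero : ∀ w : E, P w = 0 ↔ w ∈ (ℝ ∙ v) := by
      intro w
      rw [hP, Submodule.orthogonalProjectionOnto_eq_zero_iff, horth]
    -- vectors in s ∖ {v} that are in span v are negative multiples of v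
    have hneg : ∀ w ∈ s, w ≠ v → w ∈ (ℝ ∙ v) → ∃ c : ℝ, c < 0 ∧ w = c • v := by
      intro w hw hwv hmem
      obtain ⟨c, hc⟩ := Submodule.mem_span_singleton.1 hmem
      refine ⟨c, ?_, hc.symm⟩
      have hip : ⟪w, v⟫ ≤ 0 := hsip w hw v hv hwv
      rw [← hc, real_inner_smul_left] at hip
      have hc0 : c ≠ 0 := by
        rintro rfl
        exact hs0 w hw (by rw [← hc, zero_smul])
      rcases hc0.lt_or_gt with h | h
      · exact h
      · nlinarith
    -- the kernel part of s has at most 2 elements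
    have hs0card : (s.filter (fun w => P w = 0)).card ≤ 2 := by
      by_contra hcon
      push_neg at hcon
      obtain ⟨a, ha, b, hb, c, hc, hab, hac, hbc⟩ := Finset.two_lt_card.1 hcon
      simp only [mem_filter] at ha hb hc
      have key : ∀ w w', w ∈ s → w' ∈ s → P w = 0 → P w' = 0 →
          w ≠ v → w' ≠ v → w ≠ w' → False := by
        intro w w' hw hw' hPw hPw' hwv hw'v hww'
        obtain ⟨c1, hc1, rfl⟩ := hneg w hw hwv ((hPzero w).1 hPw)
        obtain ⟨c2, hc2, rfl⟩ := hneg w' hw' hw'v ((hPzero w').1 hPw')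
        have h := hsip _ hw _ hw' hww'
        rw [real_inner_smul_left, real_inner_smul_right] at h
        have hpos := mul_pos (mul_pos (neg_pos.mpr hc1) (neg_pos.mpr hc2)) hvv
        nlinarith [hpos]
      by_cases hav : a = v
      · exact key b c hb.1 hc.1 hb.2 hc.2 (by rw [← hav]; exact hab.symm)
          (by rw [← hav]; exact hac.symm) hbc
      · by_cases hbv : b = v
        · exact key a c ha.1 hc.1 ha.2 hc.2 hav (by rw [← hbv]; exact hbc.symm) hac
        · exact key a b ha.1 hb.1 ha.2 hb.2 hav hbv hab
    have hvK : v ∈ (ℝ ∙ v) := Submodule.mem_span_singleton_self v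
    have hPKv : ∀ w : E, ⟪(P w : E), v⟫ = 0 := fun w =>
      (Submodule.mem_orthogonal' _ _).1 (P w).2 v hvK
    -- v itself is in the kernel part
    have hPv : P v = 0 := (hPzero v).2 hvK
    have hPKv' : ∀ w : E, ⟪v, (P w : E)⟫ = 0 := fun w => by
      rw [real_inner_comm]; exact hPKv w
    -- projections of the rest
    have hdecomp : ∀ w ∈ s, ∀ w' ∈ s, w ≠ v → w' ≠ v →
        ⟪(P w : E), (P w' : E)⟫ ≤ ⟪w, w'⟫ := by
      intro w hw w' hw' hwv hw'v
      have hu : w - P w ∈ (ℝ ∙ v) := by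
        have h := Submodule.sub_starProjection_mem_orthogonal (K := K) w
        rwa [horth] at h
      have hu' : w' - P w' ∈ (ℝ ∙ v) := by
        have h := Submodule.sub_starProjection_mem_orthogonal (K := K) w'
        rwa [horth] at h
      obtain ⟨c1, hc1⟩ := Submodule.mem_span_singleton.1 hu
      obtain ⟨c2, hc2⟩ := Submodule.mem_span_singleton.1 hu'
      have hw1 : w = (P w : E) + c1 • v := by rw [hc1]; abel
      have hw2 : w' = (P w' : E) + c2 • v := by rw [hc2]; abel
      have hips : ⟪w, v⟫ ≤ 0 := hsip w hw v hv hwv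
      have hips' : ⟪w', v⟫ ≤ 0 := hsip w' hw' v hv hw'v
      have hc1s : c1 * ⟪v, v⟫ ≤ 0 := by
        have h : ⟪w, v⟫ = ⟪(P w : E), v⟫ + c1 * ⟪v, v⟫ := by
          conv_lhs => rw [hw1]
          rw [inner_add_left, real_inner_smul_left]
        rw [hPKv, zero_add] at h
        linarith [h ▸ hips]
      have hc2s : c2 * ⟪v, v⟫ ≤ 0 := by
        have h : ⟪w', v⟫ = ⟪(P w' : E), v⟫ + c2 * ⟪v, v⟫ := by
          conv_lhs => rw [hw2]
          rw [inner_add_left, real_inner_smul_left]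
        rw [hPKv, zero_add] at h
        linarith [h ▸ hips']
      have hc1n : c1 ≤ 0 := by nlinarith
      have hc2n : c2 ≤ 0 := by nlinarith
      have hexp : ⟪w, w'⟫ = ⟪(P w : E), (P w' : E)⟫ + c1 * c2 * ⟪v, v⟫ := by
        conv_lhs => rw [hw1, hw2]
        simp only [inner_add_left, inner_add_right, real_inner_smul_left,
          real_inner_smul_right, hPKv, hPKv', mul_zero, zero_add, add_zero]
        ring
      nlinarith
    -- now bound the non-kernel part via the induction hypothesis
    set s1 : Finset E := s.filter (fun w => ¬ P w = 0) with hs1def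
    have hs1v : ∀ w ∈ s1, w ≠ v := by
      intro w hw
      rcases mem_filter.1 hw with ⟨-, hne⟩
      rintro rfl; exact hne hPv
    have hinj : Set.InjOn (fun w => P w) s1 := by
      intro w hw w' hw' heq
      replace heq : P w = P w' := heq
      by_contra hne
      have h1 : ⟪(P w : E), (P w' : E)⟫ ≤ ⟪w, w'⟫ :=
        hdecomp w (mem_filter.1 hw).1 w' (mem_filter.1 hw').1 (hs1v w hw) (hs1v w' hw')
      have h2 : ⟪w, w'⟫ ≤ 0 := hsip w (mem_filter.1 hw).1 w' (mem_filter.1 hw').1 hne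
      have h3 : (0:ℝ) < ⟪(P w : E), (P w : E)⟫ := by
        rcases (real_inner_self_nonneg (x := (P w : E))).lt_or_eq with h | h
        · exact h
        · exfalso
          have := real_inner_self_nonpos.mp h.ge
          have : P w = 0 := by
            ext1
            simpa using this
          exact (mem_filter.1 hw).2 this
      have heq' : (P w' : E) = (P w : E) := by rw [heq]
      rw [heq'] at h1
      linarith
    set s1' : Finset K := s1.image (fun w => P w) with hs1'def
    have hcard1 : s1'.card = s1.card := Finset.card_image_of_injOn hinj
    have hbound1 : s1'.card ≤ 2 * (D - 1) := by
      refine ih (D - 1) (by omega) K inferInstance hK s1' ?_ ?_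
      · intro u hu
        obtain ⟨w, hw, rfl⟩ := Finset.mem_image.1 hu
        exact (mem_filter.1 hw).2
      · intro u hu u' hu' hne
        obtain ⟨w, hw, rfl⟩ := Finset.mem_image.1 hu
        obtain ⟨w', hw', rfl⟩ := Finset.mem_image.1 hu'
        have hww' : w ≠ w' := by rintro rfl; exact hne rfl
        have h1 : ⟪(P w : E), (P w' : E)⟫ ≤ ⟪w, w'⟫ :=
          hdecomp w (mem_filter.1 hw).1 w' (mem_filter.1 hw').1 (hs1v w hw) (hs1v w' hw')
        have h2 : ⟪w, w'⟫ ≤ 0 := hsip w (mem_filter.1 hw).1 w' (mem_filter.1 hw').1 hww'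
        calc @inner ℝ K _ (P w) (P w') = ⟪(P w : E), (P w' : E)⟫ := Submodule.coe_inner K _ _
          _ ≤ 0 := le_trans h1 h2
    have hsplit : (s.filter (fun w => P w = 0)).card + s1.card = s.card :=
      Finset.card_filter_add_card_filter_not _
    omega


/-- Product of a monotone function over any `k`-element finset of naturals dominates
the product over `range k`. -/
lemma prod_range_le_prod_of_card (f : ℕ → ℕ) (hf : Monotone f) (hf1 : ∀ i, 1 ≤ f i) :
    ∀ (k : ℕ) (B : Finset ℕ), B.card = k →
      ∏ i ∈ Finset.range k, f i ≤ ∏ i ∈ B, f i := by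
  intro k
  induction k with
  | zero => intro B _; simpa using Finset.one_le_prod' (fun i _ => hf1 i)
  | succ k ihk =>
    intro B hB
    have hne : B.Nonempty := Finset.card_pos.1 (by omega)
    set m := B.max' hne with hm
    have hmB : m ∈ B := B.max'_mem hne
    have hcard : (B.erase m).card = k := by
      rw [Finset.card_erase_of_mem hmB, hB]
      omega
    have hk : k ≤ m := by
      have hsub : B ⊆ Finset.range (m + 1) := fun a ha =>
        Finset.mem_range.2 (Nat.lt_succ_of_le (B.le_max' a ha))
      have := Finset.card_le_card hsub
      rw [hB, Finset.card_range] at this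
      omega
    calc ∏ i ∈ Finset.range (k + 1), f i = (∏ i ∈ Finset.range k, f i) * f k :=
          Finset.prod_range_succ f k
      _ ≤ (∏ i ∈ B.erase m, f i) * f m := Nat.mul_le_mul (ihk _ hcard) (hf hk)
      _ = f m * ∏ i ∈ B.erase m, f i := mul_comm _ _
      _ = ∏ i ∈ B, f i := Finset.mul_prod_erase B f hmB

/-- Two distinct integers below the product of the first `k` primes can agree modulo
at most `k - 1` of the first `n` primes. -/
lemma crt_agree_lt (n k : ℕ) (x y : ℕ)
    (hx : x < ∏ i ∈ Finset.range k, Nat.nth Nat.Prime i)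
    (hy : y < ∏ i ∈ Finset.range k, Nat.nth Nat.Prime i) (hxy : x ≠ y) :
    (Finset.univ.filter
      (fun i : Fin n => x % Nat.nth Nat.Prime i = y % Nat.nth Nat.Prime i)).card < k := by
  classical
  by_contra hcon
  push_neg at hcon
  obtain ⟨B, hBA, hBcard⟩ := Finset.exists_subset_card_eq hcon
  set B' : Finset ℕ := B.image (fun i : Fin n => (i : ℕ)) with hB'
  have hB'card : B'.card = k := by
    rw [hB', Finset.card_image_of_injective _ Fin.val_injective, hBcard]
  have hlow : ∏ i ∈ Finset.range k, Nat.nth Nat.Prime i ≤ ∏ i ∈ B', Nat.nth Nat.Prime i :=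
    prod_range_le_prod_of_card _ (Nat.nth_monotone Nat.infinite_setOf_prime)
      (fun i => (Nat.prime_nth_prime i).one_lt.le) k B' hB'card
  set d : ℕ := ((x : ℤ) - y).natAbs with hd
  have hd0 : 0 < d := by omega
  have hdP : d < ∏ i ∈ Finset.range k, Nat.nth Nat.Prime i := by omega
  have hdvd : ∀ j ∈ B', Nat.nth Nat.Prime j ∣ d := by
    intro j hj
    obtain ⟨i, hiB, rfl⟩ := Finset.mem_image.1 hj
    have hiA := hBA hiB
    rw [Finset.mem_filter] at hiA
    have hmod : x ≡ y [MOD Nat.nth Nat.Prime i] := hiA.2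
    have hz := hmod.dvd
    -- hz : (nth Prime i : ℤ) ∣ (y : ℤ) - x
    have : ((Nat.nth Nat.Prime i : ℤ)) ∣ ((x : ℤ) - y) := by
      have := hz.neg_right
      rwa [neg_sub] at this
    rwa [← Int.natAbs_natCast (Nat.nth Nat.Prime i), ← Int.natAbs_dvd_natAbs] at this
  -- pass to the finset of the primes themselves
  have hinj : Set.InjOn (Nat.nth Nat.Prime) B' :=
    (Nat.nth_injective Nat.infinite_setOf_prime).injOn
  have hprodeq : ∏ q ∈ B'.image (Nat.nth Nat.Prime), q
      = ∏ i ∈ B', Nat.nth Nat.Prime i :=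
    Finset.prod_image (fun x _ y _ h => Nat.nth_injective Nat.infinite_setOf_prime h)
  have hproddvd : (∏ q ∈ B'.image (Nat.nth Nat.Prime), q) ∣ d := by
    refine Finset.prod_primes_dvd d ?_ ?_
    · intro q hq
      obtain ⟨j, _, rfl⟩ := Finset.mem_image.1 hq
      exact (Nat.prime_nth_prime j).prime
    · intro q hq
      obtain ⟨j, hj, rfl⟩ := Finset.mem_image.1 hq
      exact hdvd j hj
  have hled : ∏ i ∈ B', Nat.nth Nat.Prime i ≤ d := by
    rw [← hprodeq]
    exact Nat.le_of_dvd hd0 hproddvd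
  omega

/-- The indicator embedding of a word into Euclidean space. -/
noncomputable def embVec {n : ℕ} (p : Fin n → ℕ) (a : Fin n → ℕ) :
    EuclideanSpace ℝ (Σ i : Fin n, Fin (p i)) :=
  WithLp.toLp 2 (fun q => if (q.2 : ℕ) = a q.1 then 1 else 0)

/-- Inner product of indicator embeddings counts agreements. -/
lemma inner_emb {n : ℕ} {p : Fin n → ℕ} (a b : Fin n → ℕ)
    (ha : ∀ i, a i < p i) (hb : ∀ i, b i < p i) :
    @inner ℝ _ _ (embVec p a) (embVec p b)
      = ((Finset.univ.filter (fun i : Fin n => a i = b i)).card : ℝ) := by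
  unfold embVec
  classical
  rw [PiLp.inner_apply]
  simp only [RCLike.inner_apply, conj_trivial]
  rw [← Finset.sum_boole]
  rw [← Finset.univ_sigma_univ, Finset.sum_sigma]
  refine Finset.sum_congr rfl ?_
  intro i _
  have hs : a i < p i := ha i
  have ht : b i < p i := hb i
  rcases eq_or_ne (a i) (b i) with heq | hne
  · rw [if_pos heq]
    rw [Finset.sum_eq_single (⟨a i, hs⟩ : Fin (p i))]
    · simp [heq]
    · intro j _ hj
      have hj' : (j : ℕ) ≠ a i := fun h => hj (Fin.ext h)
      simp [hj']
    · simp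
  · rw [if_neg hne, Finset.sum_eq_zero]
    intro j _
    rcases eq_or_ne (j : ℕ) (a i) with h | h
    · have : (j : ℕ) ≠ b i := by rw [h]; exact hne
      simp [this]
    · simp [h]

/-- **List decodability of the CRT code (via the Johnson bound).**
Let `p_1 < ⋯ < p_n` be the first `n` primes (with `p_{i+1} = Nat.nth Nat.Prime i`) and
`1 ≤ k ≤ n`.  For every received word `z` with `z_i ∈ {0, …, p_i − 1}`, the number of
integers `x ∈ {0, …, p_1⋯p_k − 1}` whose CRT encoding `(x mod p_1, …, x mod p_n)` agrees
with `z` on at least `√((k−1)·n)` coordinates is at most `2·(p_1 + ⋯ + p_n)`; i.e. the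
CRT code is `(1 − √((k−1)/n), 2·∑ p_i)`-list decodable. -/
theorem crt_code_list_decodable (n k : ℕ) (hk1 : 1 ≤ k) (hkn : k ≤ n)
    (z : Fin n → ℕ) (hz : ∀ i : Fin n, z i < Nat.nth Nat.Prime i) :
    ({x : ℕ | x < ∏ i ∈ Finset.range k, Nat.nth Nat.Prime i ∧
        Real.sqrt (((k : ℝ) - 1) * n)
          ≤ ({i : Fin n | x % Nat.nth Nat.Prime i = z i}.ncard : ℝ)}.ncard : ℝ)
      ≤ 2 * ∑ i : Fin n, (Nat.nth Nat.Prime i : ℝ) := by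
  classical
  have hn : 0 < n := lt_of_lt_of_le hk1 hkn
  set p : Fin n → ℕ := fun i => Nat.nth Nat.Prime i with hpdef
  set P : ℕ := ∏ i ∈ Finset.range k, Nat.nth Nat.Prime i with hPdef
  set t : ℝ := Real.sqrt (((k : ℝ) - 1) * n) with htdef
  set α : ℝ := Real.sqrt (((k : ℝ) - 1) / n) with hαdef
  have hk0 : (0:ℝ) ≤ (k:ℝ) - 1 := by
    have h : (1:ℝ) ≤ k := by exact_mod_cast hk1
    linarith
  have hnR : (0:ℝ) < n := by exact_mod_cast hn
  have hα0 : 0 ≤ α := Real.sqrt_nonneg _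
  have hα2 : α ^ 2 = ((k:ℝ) - 1) / n := Real.sq_sqrt (div_nonneg hk0 hnR.le)
  have ht0 : 0 ≤ t := Real.sqrt_nonneg _
  have hαt : α * t = (k:ℝ) - 1 := by
    rw [hαdef, htdef, ← Real.sqrt_mul (div_nonneg hk0 hnR.le)]
    rw [show ((k:ℝ) - 1) / n * (((k:ℝ) - 1) * n) = ((k:ℝ) - 1) ^ 2 by field_simp]
    exact Real.sqrt_sq hk0
  have hα2n : α ^ 2 * n = (k:ℝ) - 1 := by rw [hα2]; field_simp
  have hα1 : α < 1 := by
    have hlt : ((k:ℝ) - 1) / n < 1 := by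
      rw [div_lt_one hnR]
      have h : (k:ℝ) ≤ n := by exact_mod_cast hkn
      linarith
    nlinarith [hα2]
  have hpz : ∀ i, z i < p i := hz
  have hpx : ∀ x : ℕ, ∀ i : Fin n, x % p i < p i := fun x i =>
    Nat.mod_lt _ (Nat.Prime.pos (Nat.prime_nth_prime i))
  set A : ℕ → ℝ :=
    fun x => ((Finset.univ.filter (fun i : Fin n => x % p i = z i)).card : ℝ) with hA
  set g : ℕ → EuclideanSpace ℝ (Σ i : Fin n, Fin (p i)) :=
    fun x => embVec p (fun i => x % p i) - α • embVec p z with hg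
  have hinner : ∀ x y : ℕ, @inner ℝ _ _ (g x) (g y) =
      ((Finset.univ.filter (fun i : Fin n => x % p i = y % p i)).card : ℝ)
        - α * A x - α * A y + α ^ 2 * n := by
    intro x y
    rw [hg]
    simp only
    simp only [inner_sub_left, inner_sub_right, real_inner_smul_left, real_inner_smul_right]
    rw [inner_emb _ _ (hpx x) (hpx y), inner_emb _ _ (hpx x) hpz,
      inner_emb _ _ hpz (hpx y), inner_emb _ _ hpz hpz]
    have h1 : (Finset.univ.filter (fun i : Fin n => z i = z i)) = (Finset.univ : Finset (Fin n)) := by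
      simp
    have h2 : (Finset.univ.filter (fun i : Fin n => z i = y % p i))
        = (Finset.univ.filter (fun i : Fin n => y % p i = z i)) := by
      apply Finset.filter_congr; intro i _; simp [eq_comm]
    rw [h1, h2]
    rw [Finset.card_univ, Fintype.card_fin]
    rw [hA]
    ring
  have hncard : ∀ x : ℕ, (({i : Fin n | x % Nat.nth Nat.Prime i = z i}.ncard : ℕ) : ℝ) = A x := by
    intro x
    rw [hA]
    norm_num
    rw [Set.ncard_eq_toFinset_card']
    simp [Set.toFinset_setOf, hpdef]
  set S : Set ℕ := {x : ℕ | x < P ∧ t ≤ (({i : Fin n | x % Nat.nth Nat.Prime i = z i}.ncard : ℕ) : ℝ)} with hS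
  have hSfin : S.Finite := Set.Finite.subset (Set.finite_Iio P) (fun x hx => hx.1)
  set F : Finset ℕ := hSfin.toFinset with hF
  have hmem : ∀ x ∈ F, x < P ∧ t ≤ A x := by
    intro x hx
    rw [hF, Set.Finite.mem_toFinset] at hx
    exact ⟨hx.1, by rw [← hncard x]; exact hx.2⟩
  have hAn : ∀ x, A x ≤ (n:ℝ) := by
    intro x
    have h : (Finset.univ.filter (fun i : Fin n => x % p i = z i)).card ≤ n := by
      refine le_trans (Finset.card_filter_le _ _) ?_
      simp
    calc A x = ((Finset.univ.filter (fun i : Fin n => x % p i = z i)).card : ℝ) := by rw [hA]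
      _ ≤ n := by exact_mod_cast h
  have hAt : ∀ x ∈ F, (k:ℝ) - 1 ≤ α * A x := by
    intro x hx
    rw [← hαt]
    exact mul_le_mul_of_nonneg_left (hmem x hx).2 hα0
  have hpair : ∀ x ∈ F, ∀ y ∈ F, x ≠ y → @inner ℝ _ _ (g x) (g y) ≤ 0 := by
    intro x hx y hy hxy
    rw [hinner]
    have hagr : ((Finset.univ.filter (fun i : Fin n => x % p i = y % p i)).card : ℝ)
        ≤ (k:ℝ) - 1 := by
      have hc := crt_agree_lt n k x y (by rw [← hPdef]; exact (hmem x hx).1)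
        (by rw [← hPdef]; exact (hmem y hy).1) hxy
      have hc' : (Finset.univ.filter (fun i : Fin n => x % p i = y % p i)).card + 1 ≤ k := hc
      have := (Nat.cast_le (α := ℝ)).2 hc'
      push_cast at this
      linarith
    have h1 := hAt x hx
    have h2 := hAt y hy
    linarith [hα2n]
  have hself : ∀ x ∈ F, (0:ℝ) < @inner ℝ _ _ (g x) (g x) := by
    intro x hx
    rw [hinner]
    have h1 : (Finset.univ.filter (fun i : Fin n => x % p i = x % p i))
        = (Finset.univ : Finset (Fin n)) := by simp
    rw [h1, Finset.card_univ, Fintype.card_fin]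
    have h2 := hAn x
    have h3 : 0 ≤ A x := by rw [hA]; positivity
    nlinarith [mul_le_mul_of_nonneg_left h2 hα0,
      mul_pos hnR (mul_pos (sub_pos.2 hα1) (sub_pos.2 hα1))]
  have hg0 : ∀ x ∈ F, g x ≠ 0 := by
    intro x hx h0
    have h := hself x hx
    rw [h0] at h
    simp at h
  have hinj : Set.InjOn g F := by
    intro x hx y hy he
    by_contra hne
    have h1 := hpair x hx y hy hne
    rw [he] at h1
    exact absurd h1 (not_le.2 (hself y hy))
  have hrank : Module.finrank ℝ (EuclideanSpace ℝ (Σ i : Fin n, Fin (p i))) = ∑ i : Fin n, p i := by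
    rw [finrank_euclideanSpace]
    simp
  have hcard := card_le_two_mul_finrank_of_inner_nonpos (∑ i : Fin n, p i)
    (EuclideanSpace ℝ (Σ i : Fin n, Fin (p i))) inferInstance hrank (F.image g)
    (by
      intro v hv
      obtain ⟨x, hx, rfl⟩ := Finset.mem_image.1 hv
      exact hg0 x hx)
    (by
      intro v hv w hw hvw
      obtain ⟨x, hx, rfl⟩ := Finset.mem_image.1 hv
      obtain ⟨y, hy, rfl⟩ := Finset.mem_image.1 hw
      exact hpair x hx y hy (fun h => hvw (by rw [h])))
  rw [Finset.card_image_of_injOn hinj] at hcard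
  have hSF : S.ncard = F.card := by
    rw [hF]
    exact Set.ncard_eq_toFinset_card _ hSfin
  have hfinal : (S.ncard : ℝ) ≤ 2 * ∑ i : Fin n, (p i : ℝ) := by
    rw [hSF]
    have := (Nat.cast_le (α := ℝ)).2 hcard
    push_cast at this
    linarith
  exact hfinal
end

section
/- Let q ≥ 2 be an integer and ε a real number with 0 < ε < 1/q. Then the q-ary entropy function satisfies H_q(1 − 1/q − ε) ≤ 1 − C_q·ε², where C_q = q/(4·ln q). -/
/-- The `q`-ary entropy function
`H_q(x) = x·log_q(q−1) − x·log_q(x) − (1−x)·log_q(1−x)`. -/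
noncomputable def qaryEntropy (q : ℕ) (x : ℝ) : ℝ :=
  x * Real.logb q ((q : ℝ) - 1) - x * Real.logb q x - (1 - x) * Real.logb q (1 - x)

/-- Our `logb`-based entropy is Mathlib's natural-log entropy divided by `log q`. -/
lemma qaryEntropy_eq (q : ℕ) (x : ℝ) :
    qaryEntropy q x = Real.qaryEntropy q x / Real.log q := by
  unfold qaryEntropy Real.qaryEntropy Real.binEntropy Real.logb
  push_cast
  rw [Real.log_inv, Real.log_inv]
  ring

/-- Derivative bound: for `0 < t < 1/q`,
`log (q-1) + log (1/q + t) - log (1 - 1/q - t) ≥ q*t/2`. -/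
lemma deriv_lower (q : ℕ) (hq : 2 ≤ q) (t : ℝ) (ht0 : 0 < t) (ht1 : t < 1 / q) :
    (q : ℝ) * t / 2 ≤ Real.log ((q : ℝ) - 1) + Real.log (1/q + t) - Real.log (1 - 1/q - t) := by
  have hq2 : (2 : ℝ) ≤ (q : ℝ) := by exact_mod_cast hq
  have hqpos : (0 : ℝ) < q := by linarith
  have hA : (0 : ℝ) < ((q : ℝ) - 1) * (1/q + t) := by
    apply mul_pos (by linarith) (by positivity)
  have hB : (0 : ℝ) < 1 - 1/q - t := by
    have h1 : (1 : ℝ)/q ≤ 1/2 := by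
      apply div_le_div_of_nonneg_left (by norm_num) (by norm_num) hq2
    linarith
  set A : ℝ := ((q : ℝ) - 1) * (1/q + t) with hAdef
  set B : ℝ := 1 - 1/q - t with hBdef
  have key : Real.log B - Real.log A ≤ B / A - 1 := by
    have := Real.log_le_sub_one_of_pos (show 0 < B / A from div_pos hB hA)
    rwa [Real.log_div (ne_of_gt hB) (ne_of_gt hA)] at this
  have hAB : A - B = (q : ℝ) * t := by
    field_simp [hAdef, hBdef]
    rw [hAdef, hBdef]
    have hq1 : (q:ℝ) * (1/q) = 1 := mul_one_div_cancel (ne_of_gt hqpos)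
    linear_combination hq1
  have hAle2 : A ≤ 2 := by
    have h1 : 1/(q:ℝ) + t ≤ 2 / q := by
      have := ht1
      rw [show (2:ℝ)/q = 1/q + 1/q by ring]
      linarith
    calc A ≤ ((q : ℝ) - 1) * (2 / q) := by
            apply mul_le_mul_of_nonneg_left h1 (by linarith)
      _ = 2 - 2 / q := by field_simp
      _ ≤ 2 := by
            have : (0:ℝ) < 2 / q := by positivity
            linarith
  calc (q : ℝ) * t / 2 = (q * t) / 2 := by ring
    _ ≤ (q * t) / A := by
        apply div_le_div_of_nonneg_left (by positivity) hA hAle2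
    _ = (A - B) / A := by rw [hAB]
    _ = 1 - B / A := by field_simp
    _ ≤ Real.log A - Real.log B := by linarith
    _ = Real.log (((q:ℝ)-1) * (1/q + t)) - Real.log (1 - 1/q - t) := by rw [hAdef, hBdef]
    _ = Real.log ((q : ℝ) - 1) + Real.log (1/q + t) - Real.log (1 - 1/q - t) := by
        rw [Real.log_mul (by linarith) (by positivity)]

lemma entropy_at_peak (q : ℕ) (hq : 2 ≤ q) :
    Real.qaryEntropy q (1 - 1/q) = Real.log q := by
  have hq2 : (2 : ℝ) ≤ (q : ℝ) := by exact_mod_cast hq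
  have hqpos : (0 : ℝ) < q := by linarith
  unfold Real.qaryEntropy Real.binEntropy
  push_cast
  rw [Real.log_inv, Real.log_inv,
    show (1 : ℝ) - (1 - 1/q) = 1/q by ring,
    show (1 : ℝ) - 1/(q:ℝ) = ((q:ℝ) - 1)/q by field_simp,
    Real.log_div (by linarith) (by linarith), one_div, Real.log_inv]
  field_simp
  ring

/-- For every integer `q ≥ 2` and real `0 < ε < 1/q`, the `q`-ary entropy function
satisfies `H_q(1 − 1/q − ε) ≤ 1 − C_q·ε²` where `C_q = q/(4·ln q)`. -/
theorem qaryEntropy_bound (q : ℕ) (hq : 2 ≤ q) (ε : ℝ) (hε0 : 0 < ε) (hε1 : ε < 1 / q) :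
    qaryEntropy q (1 - 1 / q - ε) ≤ 1 - ((q : ℝ) / (4 * Real.log q)) * ε ^ 2 := by
  have hq2 : (2 : ℝ) ≤ (q : ℝ) := by exact_mod_cast hq
  have hqpos : (0 : ℝ) < q := by linarith
  have hlogq : 0 < Real.log q := Real.log_pos (by linarith)
  set φ : ℝ → ℝ := fun t => Real.qaryEntropy q (1 - 1/q - t) + ((q:ℝ)/4) * t^2 with hφ
  have hderiv : ∀ t ∈ Set.Ioo (0:ℝ) ε, HasDerivAt φ
      ((Real.log ((q:ℝ) - 1) + Real.log (1 - (1 - 1/q - t)) - Real.log (1 - 1/q - t)) * (-1)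
        + (q:ℝ)/4 * (2 * t)) t := by
    intro t ht
    have ht1 : t < 1/q := lt_trans ht.2 hε1
    have hp0 : (1 : ℝ) - 1/q - t ≠ 0 := by
      have h1 : (1 : ℝ)/q ≤ 1/2 := by
        apply div_le_div_of_nonneg_left (by norm_num) (by norm_num) hq2
      have : (0:ℝ) < 1 - 1/q - t := by linarith
      linarith
    have hp1 : (1 : ℝ) - 1/q - t ≠ 1 := by
      have : (0:ℝ) < 1/(q:ℝ) := by positivity
      have := ht.1
      intro h; nlinarith
    have h1 : HasDerivAt (fun s : ℝ => 1 - 1/(q:ℝ) - s) (-1) t := by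
      simpa using (hasDerivAt_id t).const_sub (1 - 1/(q:ℝ))
    have h2 := (Real.hasDerivAt_qaryEntropy hp0 hp1 (q := q)).comp t h1
    have h3 : HasDerivAt (fun s : ℝ => ((q:ℝ)/4) * s^2) ((q:ℝ)/4 * (2 * t)) t := by
      simpa [mul_comm] using (hasDerivAt_pow 2 t).const_mul ((q:ℝ)/4)
    exact h2.add h3
  have hant : AntitoneOn φ (Set.Icc 0 ε) := by
    apply antitoneOn_of_deriv_nonpos (convex_Icc 0 ε)
    · apply ContinuousOn.add
      · exact (Real.qaryEntropy_continuous.comp (by fun_prop)).continuousOn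
      · fun_prop
    · rw [interior_Icc]
      intro t ht
      exact (hderiv t ht).differentiableAt.differentiableWithinAt
    · rw [interior_Icc]
      intro t ht
      rw [(hderiv t ht).deriv]
      have ht1 : t < 1/q := lt_trans ht.2 hε1
      have key := deriv_lower q hq t ht.1 ht1
      have : (1:ℝ) - (1 - 1/q - t) = 1/q + t := by ring
      rw [this]
      nlinarith
  have hmono := hant (Set.left_mem_Icc.mpr hε0.le) (Set.right_mem_Icc.mpr hε0.le) hε0.le
  have hpeak : φ 0 = Real.log q := by
    show Real.qaryEntropy q (1 - 1/q - 0) + ((q:ℝ)/4) * 0^2 = Real.log q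
    rw [show (1:ℝ) - 1/q - 0 = 1 - 1/q from by ring, entropy_at_peak q hq]
    ring
  rw [hpeak] at hmono
  have hmono' : Real.qaryEntropy q (1 - 1/(q:ℝ) - ε) + ((q:ℝ)/4) * ε^2 ≤ Real.log q := hmono
  -- hmono : Real.qaryEntropy q (1 - 1/q - ε) + q/4 * ε^2 ≤ log q
  rw [qaryEntropy_eq]
  rw [div_le_iff₀ hlogq]
  have : (1 - (q:ℝ) / (4 * Real.log q) * ε ^ 2) * Real.log q
      = Real.log q - (q:ℝ)/4 * ε^2 := by
    field_simp
  rw [this]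
  linarith
end

section
/- (Zyablov–Pinsker.) Let q ≥ 2 and L ≥ 1 be integers and let ρ be a real number with 0 < ρ < 1 − 1/q. Then for every positive integer n there exists a code C ⊆ [q]^n that is (ρ, L)-list decodable and has |C| ≥ q^{n·(1 − H_q(ρ) − 1/L)}; i.e., there exists a (ρ, L)-list decodable q-ary code of rate at least 1 − H_q(ρ) − 1/L. -/
open Finset

open scoped Classical

private lemma zp_H_pos (q : ℕ) (hq : 2 ≤ q) (ρ : ℝ) (hρ0 : 0 < ρ) (hρ1 : ρ < 1 - 1 / q) :
    0 < qaryEntropy q ρ := by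
  have hq2 : (2:ℝ) ≤ q := by exact_mod_cast hq
  have hq1 : (1:ℝ) < q := by linarith
  have hinv : (0:ℝ) < 1 / q := by positivity
  have hρ1' : ρ < 1 := by linarith
  have h1 : 0 ≤ ρ * Real.logb q ((q:ℝ) - 1) :=
    mul_nonneg hρ0.le (Real.logb_nonneg hq1 (by linarith))
  have h2 : ρ * Real.logb q ρ < 0 :=
    mul_neg_of_pos_of_neg hρ0 (Real.logb_neg hq1 hρ0 hρ1')
  have h3 : (1 - ρ) * Real.logb q (1 - ρ) ≤ 0 :=
    mul_nonpos_of_nonneg_of_nonpos (by linarith) (Real.logb_nonpos hq1 (by linarith) (by linarith))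
  unfold qaryEntropy
  linarith

private lemma zp_ball_card (q n : ℕ) (hq : 2 ≤ q) (ρ : ℝ) (hρ0 : 0 < ρ) (hρ1 : ρ < 1 - 1 / q)
    (z : Fin n → Fin q) :
    (((univ : Finset (Fin n → Fin q)).filter fun c => (hammingDist c z : ℝ) ≤ ρ * n).card : ℝ)
      ≤ (q : ℝ) ^ (qaryEntropy q ρ * n) := by
  have hq2 : (2:ℝ) ≤ q := by exact_mod_cast hq
  have hq0 : (0:ℝ) < q := by linarith
  have hq1 : (1:ℝ) < q := by linarith
  have hq1' : (0:ℝ) < (q:ℝ) - 1 := by linarith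
  have hinvq : (0:ℝ) < 1 / q := by positivity
  have hρ1' : ρ < 1 := by linarith
  have h1ρ : 0 < 1 - ρ := by linarith
  set t : ℝ := ρ / (((q:ℝ) - 1) * (1 - ρ)) with ht
  have ht0 : 0 < t := by positivity
  have ht1 : t ≤ 1 := by
    rw [div_le_one (by positivity)]
    have hqq : (q:ℝ) * (1 / q) = 1 := mul_one_div_cancel (ne_of_gt hq0)
    nlinarith [mul_lt_mul_of_pos_left hρ1 hq0]
  set g : Fin n → Fin q → ℝ := fun i a => if a = z i then 1 - ρ else ρ / ((q:ℝ) - 1) with hg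
  have hgnn : ∀ (i : Fin n) (a : Fin q), 0 ≤ g i a := by
    intro i a
    by_cases h : a = z i <;> simp only [hg, h, if_true, if_false] <;> positivity
  have htot : ∑ c : Fin n → Fin q, ∏ i, g i (c i) = 1 := by
    rw [← Fintype.piFinset_univ, Finset.sum_prod_piFinset]
    have hone : ∀ i : Fin n, ∑ a : Fin q, g i a = 1 := by
      intro i
      have hsplit : ∀ a : Fin q, g i a
          = ρ / ((q:ℝ) - 1) + (if a = z i then 1 - ρ - ρ / ((q:ℝ) - 1) else 0) := by
        intro a
        by_cases h : a = z i <;> simp [hg, h]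
      rw [Finset.sum_congr rfl fun a _ => hsplit a, Finset.sum_add_distrib,
        Finset.sum_const, Finset.sum_ite_eq' univ (z i)]
      simp only [Finset.mem_univ, if_true, Finset.card_univ, Fintype.card_fin, nsmul_eq_mul]
      field_simp
      ring
    rw [Finset.prod_congr rfl fun i _ => hone i, Finset.prod_const, one_pow]
  have hpoint : ∀ c : Fin n → Fin q, (hammingDist c z : ℝ) ≤ ρ * n →
      (q:ℝ) ^ (-(qaryEntropy q ρ * n)) ≤ ∏ i, g i (c i) := by
    intro c hc
    set d := hammingDist c z with hd
    have hdn : d ≤ n := by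
      have := hammingDist_le_card_fintype (x := c) (y := z)
      simpa using this
    have hcard1 : (univ.filter fun i : Fin n => ¬ c i = z i).card = d := by
      rw [hd, hammingDist]
    have hcard2 : (univ.filter fun i : Fin n => c i = z i).card = n - d := by
      have h := Finset.card_filter_add_card_filter_not
        (s := (univ : Finset (Fin n))) (p := fun i => c i = z i)
      rw [Finset.card_univ, Fintype.card_fin] at h
      omega
    have hprod : ∏ i, g i (c i) = (1 - ρ) ^ (n - d) * (ρ / ((q:ℝ) - 1)) ^ d := by
      rw [← Finset.prod_filter_mul_prod_filter_not univ (fun i => c i = z i)]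
      congr 1
      · rw [Finset.prod_congr rfl (fun i hi => ?_), Finset.prod_const, hcard2]
        simp [hg, (Finset.mem_filter.mp hi).2]
      · rw [Finset.prod_congr rfl (fun i hi => ?_), Finset.prod_const, hcard1]
        simp [hg, (Finset.mem_filter.mp hi).2]
    have hrw : (1 - ρ) ^ (n - d) * (ρ / ((q:ℝ) - 1)) ^ d = (1 - ρ) ^ n * t ^ d := by
      have he : ρ / ((q:ℝ) - 1) = (1 - ρ) * t := by
        rw [ht]; field_simp
      rw [he, mul_pow, ← mul_assoc, ← pow_add, Nat.sub_add_cancel hdn]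
    have hmon : t ^ (ρ * n) ≤ t ^ (d:ℝ) := Real.rpow_le_rpow_of_exponent_ge ht0 ht1 hc
    have hkey : (q:ℝ) ^ (-(qaryEntropy q ρ * n)) = (1 - ρ) ^ (n:ℝ) * t ^ (ρ * n) := by
      rw [Real.rpow_def_of_pos hq0, Real.rpow_def_of_pos h1ρ, Real.rpow_def_of_pos ht0,
        ← Real.exp_add]
      congr 1
      have hlogt : Real.log t = Real.log ρ - (Real.log ((q:ℝ) - 1) + Real.log (1 - ρ)) := by
        rw [ht, Real.log_div (ne_of_gt hρ0) (by positivity), Real.log_mul (ne_of_gt hq1') (ne_of_gt h1ρ)]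
      rw [hlogt]
      have hlq : Real.log q ≠ 0 := ne_of_gt (Real.log_pos hq1)
      simp only [qaryEntropy, Real.logb]
      field_simp
      ring
    calc (q:ℝ) ^ (-(qaryEntropy q ρ * n)) = (1 - ρ) ^ (n:ℝ) * t ^ (ρ * n) := hkey
    _ ≤ (1 - ρ) ^ (n:ℝ) * t ^ (d:ℝ) := by
        apply mul_le_mul_of_nonneg_left hmon (Real.rpow_nonneg h1ρ.le _)
    _ = (1 - ρ) ^ n * t ^ d := by rw [Real.rpow_natCast, Real.rpow_natCast]
    _ = ∏ i, g i (c i) := by rw [hprod, hrw]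
  set V := ((univ : Finset (Fin n → Fin q)).filter fun c => (hammingDist c z : ℝ) ≤ ρ * n).card with hV
  have hBpos : (0:ℝ) < (q:ℝ) ^ (qaryEntropy q ρ * n) := Real.rpow_pos_of_pos hq0 _
  have h1 : (V:ℝ) * (q:ℝ) ^ (-(qaryEntropy q ρ * n)) ≤ 1 := by
    calc (V:ℝ) * (q:ℝ) ^ (-(qaryEntropy q ρ * n))
        = ∑ _c ∈ (univ : Finset (Fin n → Fin q)).filter (fun c => (hammingDist c z : ℝ) ≤ ρ * n),
            (q:ℝ) ^ (-(qaryEntropy q ρ * n)) := by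
          rw [Finset.sum_const, nsmul_eq_mul]
    _ ≤ ∑ c ∈ (univ : Finset (Fin n → Fin q)).filter (fun c => (hammingDist c z : ℝ) ≤ ρ * n),
            ∏ i, g i (c i) :=
          Finset.sum_le_sum fun c hc => hpoint c (Finset.mem_filter.mp hc).2
    _ ≤ ∑ c : Fin n → Fin q, ∏ i, g i (c i) :=
          Finset.sum_le_sum_of_subset_of_nonneg (Finset.filter_subset _ _)
            (fun c _ _ => Finset.prod_nonneg fun i _ => hgnn i _)
    _ = 1 := htot
  rw [Real.rpow_neg hq0.le] at h1
  calc (V:ℝ) = (V * ((q:ℝ) ^ (qaryEntropy q ρ * n))⁻¹) * (q:ℝ) ^ (qaryEntropy q ρ * n) := by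
        field_simp
  _ ≤ 1 * (q:ℝ) ^ (qaryEntropy q ρ * n) := mul_le_mul_of_nonneg_right h1 hBpos.le
  _ = _ := one_mul _

private lemma zp_pow_le_factorial : ∀ K : ℕ, 3 ≤ K → ((3:ℝ)/2) ^ K ≤ K.factorial := by
  intro K hK
  induction K with
  | zero => omega
  | succ K ih =>
    rcases Nat.lt_or_ge K 3 with h | h
    · interval_cases K
      · omega
      · omega
      · norm_num [Nat.factorial]
    · have h1 := ih (by omega)
      rw [pow_succ, Nat.factorial_succ]
      push_cast
      have h2 : ((3:ℝ)/2) ≤ (K:ℝ) + 1 := by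
        have : (3:ℝ) ≤ K := by exact_mod_cast h
        linarith
      have h3 : (0:ℝ) < K.factorial := by exact_mod_cast K.factorial_pos
      nlinarith [pow_nonneg (by norm_num : (0:ℝ) ≤ 3/2) K]

private lemma zp_choose_mul_pow_le (k M N : ℕ) (h : M ≤ N) :
    M.choose k * N ^ k ≤ N.choose k * M ^ k := by
  have key : M.descFactorial k * N ^ k ≤ N.descFactorial k * M ^ k := by
    rw [Nat.descFactorial_eq_prod_range, Nat.descFactorial_eq_prod_range]
    have hN : N ^ k = ∏ _i ∈ range k, N := by rw [Finset.prod_const, Finset.card_range]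
    have hM : M ^ k = ∏ _i ∈ range k, M := by rw [Finset.prod_const, Finset.card_range]
    rw [hN, hM, ← Finset.prod_mul_distrib, ← Finset.prod_mul_distrib]
    refine Finset.prod_le_prod' fun i _ => ?_
    rw [Nat.sub_mul, Nat.sub_mul, mul_comm N M]
    exact Nat.sub_le_sub_left (Nat.mul_le_mul_left i h) (M * N)
  have h2 : k.factorial * (M.choose k * N ^ k) ≤ k.factorial * (N.choose k * M ^ k) := by
    calc k.factorial * (M.choose k * N ^ k) = M.descFactorial k * N ^ k := by
          rw [Nat.descFactorial_eq_factorial_mul_choose, mul_assoc]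
    _ ≤ N.descFactorial k * M ^ k := key
    _ = k.factorial * (N.choose k * M ^ k) := by
          rw [Nat.descFactorial_eq_factorial_mul_choose, mul_assoc]
  exact Nat.le_of_mul_le_mul_left h2 k.factorial_pos

/-- **Zyablov–Pinsker.**  For integers `q ≥ 2`, `L ≥ 1` and real `0 < ρ < 1 − 1/q`,
for every block length `n ≥ 1` there exists a `(ρ, L)`-list decodable code
`C ⊆ [q]^n` with `|C| ≥ q^{n·(1 − H_q(ρ) − 1/L)}`, i.e. of rate at least
`1 − H_q(ρ) − 1/L`. -/
theorem zyablov_pinsker (q L : ℕ) (hq : 2 ≤ q) (hL : 1 ≤ L)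
    (ρ : ℝ) (hρ0 : 0 < ρ) (hρ1 : ρ < 1 - 1 / q)
    (n : ℕ) (hn : 0 < n) :
    ∃ C : Finset (Fin n → Fin q),
      (∀ z : Fin n → Fin q,
        {c ∈ (C : Set (Fin n → Fin q)) | (hammingDist c z : ℝ) ≤ ρ * n}.ncard ≤ L)
      ∧ (q : ℝ) ^ ((n : ℝ) * (1 - qaryEntropy q ρ - 1 / L)) ≤ (C.card : ℝ) := by
  have hq2 : (2:ℝ) ≤ q := by exact_mod_cast hq
  have hq0 : (0:ℝ) < q := by linarith
  have hq1 : (1:ℝ) < q := by linarith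
  have hL0 : (0:ℝ) < L := by exact_mod_cast hL
  have hHpos : 0 < qaryEntropy q ρ := zp_H_pos q hq ρ hρ0 hρ1
  set H := qaryEntropy q ρ with hH
  set R := (q:ℝ) ^ ((n:ℝ) * (1 - H - 1/L)) with hRdef
  have hR0 : 0 < R := Real.rpow_pos_of_pos hq0 _
  have hcardΩ : Fintype.card (Fin n → Fin q) = q ^ n := by simp
  have hexp_lt : (n:ℝ) * (1 - H - 1/L) < n := by
    have h1 : 1 - H - 1/L < 1 := by
      have : (0:ℝ) < 1/L := by positivity
      linarith
    have hn0 : (0:ℝ) < n := by exact_mod_cast hn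
    nlinarith
  have hRN : R < ((q^n : ℕ) : ℝ) := by
    have he : ((q^n : ℕ):ℝ) = (q:ℝ) ^ ((n:ℕ):ℝ) := by
      rw [Real.rpow_natCast]; push_cast; ring
    rw [he, hRdef]
    exact Real.rpow_lt_rpow_of_exponent_lt hq1 hexp_lt
  have hncard : ∀ (C : Finset (Fin n → Fin q)) (z : Fin n → Fin q),
      {c ∈ (C : Set (Fin n → Fin q)) | (hammingDist c z : ℝ) ≤ ρ * n}.ncard
        = (C.filter fun c => (hammingDist c z : ℝ) ≤ ρ * n).card := by
    intro C z
    have hs : {c ∈ (C : Set (Fin n → Fin q)) | (hammingDist c z : ℝ) ≤ ρ * n}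
        = ↑(C.filter fun c => (hammingDist c z : ℝ) ≤ ρ * n) := by
      ext c
      simp
    rw [hs, Set.ncard_coe_finset]
  by_cases hRL : R ≤ (L:ℝ)
  · -- trivial case: a small code suffices
    obtain ⟨C, -, hC⟩ := Finset.exists_subset_card_eq
      (s := (univ : Finset (Fin n → Fin q))) (n := ⌈R⌉₊)
      (by rw [Finset.card_univ, hcardΩ]; exact Nat.ceil_le.mpr hRN.le)
    refine ⟨C, fun z => ?_, ?_⟩
    · rw [hncard]
      calc (C.filter fun c => (hammingDist c z : ℝ) ≤ ρ * n).card
          ≤ C.card := Finset.card_filter_le _ _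
      _ = ⌈R⌉₊ := hC
      _ ≤ L := Nat.ceil_le.mpr hRL
    · rw [hC]; exact Nat.le_ceil R
  · push_neg at hRL
    have hL2 : 2 ≤ L := by
      by_contra h
      have hL1 : L = 1 := by omega
      have hRlt : R < 1 := by
        have hneg : (n:ℝ) * (1 - H - 1/L) < 0 := by
          rw [hL1]
          push_cast
          have hn0 : (0:ℝ) < n := by exact_mod_cast hn
          nlinarith
        rw [hRdef]
        exact Real.rpow_lt_one_of_one_lt_of_neg hq1 hneg
      rw [hL1] at hRL
      push_cast at hRL
      linarith
    set K := L + 1 with hK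
    set M := ⌈R⌉₊ with hM
    set Nn := q ^ n with hNn
    have hNnpos : 0 < Nn := Nat.pow_pos (by omega)
    have hRM : R ≤ (M:ℝ) := Nat.le_ceil R
    have hLM : L < M := by
      have : (L:ℝ) < M := lt_of_lt_of_le hRL hRM
      exact_mod_cast this
    have hKM : K ≤ M := hLM
    have hMN : M ≤ Nn := Nat.ceil_le.mpr hRN.le
    have hM32 : (M:ℝ) < 3/2 * R := by
      have h1 : (M:ℝ) < R + 1 := Nat.ceil_lt_add_one hR0.le
      have h2 : (2:ℝ) < R := lt_of_le_of_lt (by exact_mod_cast hL2) hRL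
      linarith
    set B := (q:ℝ) ^ (H * (n:ℝ)) with hB
    have hBpos : 0 < B := Real.rpow_pos_of_pos hq0 _
    set ball : (Fin n → Fin q) → Finset (Fin n → Fin q) :=
      fun z => univ.filter fun c => (hammingDist c z : ℝ) ≤ ρ * n with hball
    have hballcard : ∀ z, ((ball z).card : ℝ) ≤ B := by
      intro z
      rw [hball, hB, hH]
      exact zp_ball_card q n hq ρ hρ0 hρ1 z
    set S : Finset (Finset (Fin n → Fin q)) :=
      univ.biUnion (fun z => Finset.powersetCard K (ball z)) with hSdef
    have hSmem : ∀ s ∈ S, s.card = K := by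
      intro s hs
      rw [hSdef, Finset.mem_biUnion] at hs
      obtain ⟨z, -, hz⟩ := hs
      exact (Finset.mem_powersetCard.mp hz).2
    have hScard : (S.card : ℝ) * (K.factorial : ℝ) ≤ (Nn : ℝ) * B ^ K := by
      have h1 : S.card ≤ ∑ z : Fin n → Fin q, (Finset.powersetCard K (ball z)).card :=
        Finset.card_biUnion_le
      have h2 : ∀ z : Fin n → Fin q,
          ((Finset.powersetCard K (ball z)).card : ℝ) * K.factorial ≤ B ^ K := by
        intro z
        rw [Finset.card_powersetCard]
        have h3 : ((ball z).card.choose K : ℕ) * K.factorial ≤ (ball z).card ^ K := by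
          rw [mul_comm, ← Nat.descFactorial_eq_factorial_mul_choose]
          exact Nat.descFactorial_le_pow _ _
        calc (((ball z).card.choose K : ℝ)) * K.factorial
            ≤ ((ball z).card : ℝ) ^ K := by exact_mod_cast h3
        _ ≤ B ^ K := pow_le_pow_left₀ (Nat.cast_nonneg _) (hballcard z) K
      calc (S.card : ℝ) * K.factorial
          ≤ ((∑ z : Fin n → Fin q, (Finset.powersetCard K (ball z)).card : ℕ) : ℝ)
              * K.factorial := by
            apply mul_le_mul_of_nonneg_right _ (Nat.cast_nonneg _)
            exact_mod_cast h1
      _ = ∑ z : Fin n → Fin q,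
            ((Finset.powersetCard K (ball z)).card : ℝ) * K.factorial := by
            push_cast
            rw [Finset.sum_mul]
      _ ≤ ∑ _z : Fin n → Fin q, B ^ K := Finset.sum_le_sum fun z _ => h2 z
      _ = (Nn : ℝ) * B ^ K := by
            rw [Finset.sum_const, Finset.card_univ, hcardΩ, nsmul_eq_mul, hNn]
    -- key strict inequality
    have hKN : K ≤ Nn := hKM.trans hMN
    have hidnat : Nn.choose M * M.choose K = Nn.choose K * (Nn - K).choose (M - K) :=
      Nat.choose_mul (n := Nn) hKM
    have hA : (Nn:ℝ) * B ^ K * (M:ℝ) ^ K < (K.factorial : ℝ) * (Nn:ℝ) ^ K := by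
      have hn0 : (0:ℝ) < n := by exact_mod_cast hn
      have hNr : ((Nn:ℕ):ℝ) = (q:ℝ) ^ ((n:ℝ)) := by
        rw [hNn, Real.rpow_natCast]; push_cast; ring
      have hBK : B ^ K = (q:ℝ) ^ (H * (n:ℝ) * K) := by
        rw [hB, ← Real.rpow_natCast ((q:ℝ) ^ (H * (n:ℝ))) K, ← Real.rpow_mul hq0.le]
      have hRK : R ^ K = (q:ℝ) ^ ((n:ℝ) * (1 - H - 1/L) * K) := by
        rw [hRdef, ← Real.rpow_natCast ((q:ℝ) ^ ((n:ℝ) * (1 - H - 1/L))) K,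
          ← Real.rpow_mul hq0.le]
      have hNK : (Nn:ℝ) ^ K = (q:ℝ) ^ ((n:ℝ) * K) := by
        rw [hNr, ← Real.rpow_natCast ((q:ℝ) ^ ((n:ℝ))) K, ← Real.rpow_mul hq0.le]
      have hMK : (M:ℝ) ^ K < (3/2 * R) ^ K := by
        apply pow_lt_pow_left₀ hM32 (Nat.cast_nonneg M)
        omega
      have hexp : (n:ℝ) + (H * (n:ℝ) * K + (n:ℝ) * (1 - H - 1/L) * K) ≤ (n:ℝ) * K := by
        have hKL : (K:ℝ) = (L:ℝ) + 1 := by rw [hK]; push_cast; ring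
        rw [hKL]
        have he1 : (n:ℝ) * ((L:ℝ)+1) / L = (n:ℝ) + (n:ℝ)/L := by field_simp
        have he2 : H * (n:ℝ) * ((L:ℝ)+1) + (n:ℝ) * (1 - H - 1/L) * ((L:ℝ)+1)
            = (n:ℝ) * ((L:ℝ)+1) - (n:ℝ) * ((L:ℝ)+1) / L := by field_simp; ring
        rw [he2, he1]
        have : 0 ≤ (n:ℝ)/L := by positivity
        linarith
      calc (Nn:ℝ) * B ^ K * (M:ℝ) ^ K
          < (Nn:ℝ) * B ^ K * (3/2 * R) ^ K := by
            apply mul_lt_mul_of_pos_left hMK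
            positivity
      _ = (3/2:ℝ) ^ K * ((q:ℝ) ^ ((n:ℝ)) * ((q:ℝ) ^ (H * (n:ℝ) * K)
            * (q:ℝ) ^ ((n:ℝ) * (1 - H - 1/L) * K))) := by
            rw [mul_pow, hNr, hBK, hRK]; ring
      _ = (3/2:ℝ) ^ K * (q:ℝ) ^ ((n:ℝ) + (H * (n:ℝ) * K + (n:ℝ) * (1 - H - 1/L) * K)) := by
            rw [← Real.rpow_add hq0, ← Real.rpow_add hq0]
      _ ≤ (3/2:ℝ) ^ K * (q:ℝ) ^ ((n:ℝ) * K) := by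
            apply mul_le_mul_of_nonneg_left (Real.rpow_le_rpow_of_exponent_le hq1.le hexp)
            positivity
      _ ≤ (K.factorial : ℝ) * (q:ℝ) ^ ((n:ℝ) * K) := by
            apply mul_le_mul_of_nonneg_right (zp_pow_le_factorial K (by omega))
            positivity
      _ = (K.factorial : ℝ) * (Nn:ℝ) ^ K := by rw [hNK]
    have hkey : (S.card : ℝ) * (((Nn - K).choose (M - K) : ℕ) : ℝ) < ((Nn.choose M : ℕ) : ℝ) := by
      have hT : (0:ℝ) < ((Nn.choose M : ℕ) : ℝ) := by
        exact_mod_cast Nat.choose_pos hMN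
      have hCK : (0:ℝ) < ((Nn.choose K : ℕ) : ℝ) := by
        exact_mod_cast Nat.choose_pos hKN
      have hKf : (0:ℝ) < (K.factorial : ℝ) := by exact_mod_cast K.factorial_pos
      have hNpos : (0:ℝ) < (Nn:ℝ) := by exact_mod_cast hNnpos
      have hii : (((Nn - K).choose (M - K) : ℕ) : ℝ) * ((Nn.choose K : ℕ) : ℝ)
          = ((Nn.choose M : ℕ) : ℝ) * ((M.choose K : ℕ) : ℝ) := by
        exact_mod_cast (mul_comm ((Nn - K).choose (M - K)) (Nn.choose K)).trans hidnat.symm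
      have hcp : ((M.choose K : ℕ) : ℝ) * (Nn:ℝ) ^ K ≤ ((Nn.choose K : ℕ) : ℝ) * (M:ℝ) ^ K := by
        exact_mod_cast zp_choose_mul_pow_le K M Nn hMN
      rw [← mul_lt_mul_iff_left₀ (show (0:ℝ) < (K.factorial : ℝ) * (Nn:ℝ) ^ K * ((Nn.choose K : ℕ) : ℝ) by positivity)]
      calc (S.card : ℝ) * (((Nn - K).choose (M - K) : ℕ) : ℝ)
            * ((K.factorial : ℝ) * (Nn:ℝ) ^ K * ((Nn.choose K : ℕ) : ℝ))
          = ((S.card : ℝ) * (K.factorial : ℝ))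
              * (((((Nn - K).choose (M - K) : ℕ) : ℝ) * ((Nn.choose K : ℕ) : ℝ)) * (Nn:ℝ) ^ K) := by
            ring
        _ = ((S.card : ℝ) * (K.factorial : ℝ))
              * ((((M.choose K : ℕ) : ℝ) * (Nn:ℝ) ^ K) * ((Nn.choose M : ℕ) : ℝ)) := by
            rw [hii]; ring
        _ ≤ ((Nn:ℝ) * B ^ K)
              * ((((Nn.choose K : ℕ) : ℝ) * (M:ℝ) ^ K) * ((Nn.choose M : ℕ) : ℝ)) := by
            apply mul_le_mul hScard
            · apply mul_le_mul_of_nonneg_right hcp hT.le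
            · positivity
            · positivity
        _ = ((Nn:ℝ) * B ^ K * (M:ℝ) ^ K) * (((Nn.choose K : ℕ) : ℝ) * ((Nn.choose M : ℕ) : ℝ)) := by
            ring
        _ < ((K.factorial : ℝ) * (Nn:ℝ) ^ K) * (((Nn.choose K : ℕ) : ℝ) * ((Nn.choose M : ℕ) : ℝ)) := by
            apply mul_lt_mul_of_pos_right hA
            positivity
        _ = ((Nn.choose M : ℕ) : ℝ) * ((K.factorial : ℝ) * (Nn:ℝ) ^ K * ((Nn.choose K : ℕ) : ℝ)) := by
            ring
    -- existence of a good code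
    have hgood : ∃ C ∈ Finset.powersetCard M (univ : Finset (Fin n → Fin q)),
        ∀ s ∈ S, ¬ s ⊆ C := by
      by_contra hcon
      push_neg at hcon
      set 𝒞 := Finset.powersetCard M (univ : Finset (Fin n → Fin q)) with h𝒞
      have hc1 : 𝒞.card ≤ ∑ C ∈ 𝒞, (S.filter (· ⊆ C)).card := by
        calc 𝒞.card = ∑ _C ∈ 𝒞, 1 := by rw [Finset.sum_const, smul_eq_mul, mul_one]
        _ ≤ ∑ C ∈ 𝒞, (S.filter (· ⊆ C)).card := by
            apply Finset.sum_le_sum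
            intro C hC
            obtain ⟨s, hs, hsC⟩ := hcon C hC
            exact Finset.card_pos.mpr ⟨s, Finset.mem_filter.mpr ⟨hs, hsC⟩⟩
      have hc2 : ∑ C ∈ 𝒞, (S.filter (· ⊆ C)).card
          = ∑ s ∈ S, (𝒞.filter (fun C => s ⊆ C)).card := by
        simp_rw [Finset.card_filter]
        exact Finset.sum_comm
      have hc3 : ∀ s ∈ S, (𝒞.filter (fun C => s ⊆ C)).card ≤ (Nn - K).choose (M - K) := by
        intro s hs
        have hsK := hSmem s hs
        have hmaps : ∀ C ∈ 𝒞.filter (fun C => s ⊆ C),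
            C \ s ∈ Finset.powersetCard (M - K) (univ \ s) := by
          intro C hC
          rw [Finset.mem_filter] at hC
          obtain ⟨hC𝒞, hsC⟩ := hC
          rw [h𝒞, Finset.mem_powersetCard] at hC𝒞
          rw [Finset.mem_powersetCard]
          constructor
          · exact Finset.sdiff_subset_sdiff hC𝒞.1 (Finset.Subset.refl s)
          · rw [Finset.card_sdiff_of_subset hsC, hC𝒞.2, hsK]
        have hinj : Set.InjOn (fun C => C \ s) ↑(𝒞.filter (fun C => s ⊆ C)) := by
          intro C1 h1 C2 h2 he
          simp only [Finset.coe_filter, Set.mem_setOf_eq] at h1 h2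
          have e1 := Finset.sdiff_union_of_subset h1.2
          have e2 := Finset.sdiff_union_of_subset h2.2
          rw [← e1, ← e2]
          simp only at he
          rw [he]
        calc (𝒞.filter (fun C => s ⊆ C)).card
            ≤ (Finset.powersetCard (M - K) (univ \ s)).card :=
              Finset.card_le_card_of_injOn _ hmaps hinj
        _ = (Nn - K).choose (M - K) := by
              rw [Finset.card_powersetCard, Finset.card_sdiff_of_subset (Finset.subset_univ s),
                Finset.card_univ, hcardΩ, hsK, hNn]
      have hc4 : 𝒞.card = Nn.choose M := by
        rw [h𝒞, Finset.card_powersetCard, Finset.card_univ, hcardΩ, hNn]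
      have hc5 : Nn.choose M ≤ S.card * (Nn - K).choose (M - K) := by
        calc Nn.choose M = 𝒞.card := hc4.symm
        _ ≤ ∑ C ∈ 𝒞, (S.filter (· ⊆ C)).card := hc1
        _ = ∑ s ∈ S, (𝒞.filter (fun C => s ⊆ C)).card := hc2
        _ ≤ ∑ _s ∈ S, (Nn - K).choose (M - K) := Finset.sum_le_sum hc3
        _ = S.card * (Nn - K).choose (M - K) := by rw [Finset.sum_const, smul_eq_mul]
      have : ((Nn.choose M : ℕ) : ℝ) ≤ (S.card : ℝ) * (((Nn - K).choose (M - K) : ℕ) : ℝ) := by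
        exact_mod_cast hc5
      linarith
    obtain ⟨C, hCmem, hCgood⟩ := hgood
    have hCcard : C.card = M := (Finset.mem_powersetCard.mp hCmem).2
    refine ⟨C, fun z => ?_, ?_⟩
    · rw [hncard]
      by_contra hgt
      push_neg at hgt
      obtain ⟨s, hsub, hscard⟩ := Finset.exists_subset_card_eq
        (show K ≤ (C.filter fun c => (hammingDist c z : ℝ) ≤ ρ * n).card from hgt)
      apply hCgood s ?_ (hsub.trans (Finset.filter_subset _ _))
      rw [hSdef, Finset.mem_biUnion]
      refine ⟨z, Finset.mem_univ z, Finset.mem_powersetCard.mpr ⟨?_, hscard⟩⟩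
      intro c hc
      have hc' := hsub hc
      rw [Finset.mem_filter] at hc'
      rw [hball, Finset.mem_filter]
      exact ⟨Finset.mem_univ c, hc'.2⟩
    · rw [hCcard]
      exact hRM
end

section
/- For every integer n ≥ 2, the n-th prime number p_n (with p_1 = 2, p_2 = 3, …) satisfies p_n ≤ 2·n·log₂(n). -/
lemma cheb_pow (m : ℕ) (hm : 4 ≤ m) :
    4 ^ m ≤ (2 * m) ^ (Nat.count Nat.Prime (2 * m + 1) + 1) := by
  set k := Nat.count Nat.Prime (2 * m + 1) with hk
  set N := Nat.centralBinom m with hNdef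
  have hN0 : N ≠ 0 := Nat.centralBinom_ne_zero m
  have hle : ∀ p ∈ N.primeFactors, p ^ N.factorization p ≤ 2 * m := by
    intro p hp
    rw [hNdef, Nat.centralBinom_eq_two_mul_choose]
    exact Nat.pow_factorization_choose_le (by omega)
  have hcard : N.primeFactors.card ≤ k := by
    have hsub : N.primeFactors ⊆ (Finset.range (2 * m + 1)).filter Nat.Prime := by
      intro p hp
      have hpp : p.Prime := Nat.prime_of_mem_primeFactors hp
      have hν : N.factorization p ≠ 0 :=
        (hpp.factorization_pos_of_dvd hN0 (Nat.dvd_of_mem_primeFactors hp)).ne'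
      have h1 : p ≤ p ^ N.factorization p := Nat.le_self_pow hν p
      have h2 := hle p hp
      simp only [Finset.mem_filter, Finset.mem_range]
      exact ⟨by omega, hpp⟩
    calc N.primeFactors.card ≤ _ := Finset.card_le_card hsub
      _ = k := by rw [hk, Nat.count_eq_card_filter_range]
  have hprod : N ≤ (2 * m) ^ k := by
    have h1 : ∏ p ∈ N.primeFactors, p ^ N.factorization p = N := by
      have h2 := Nat.factorization_prod_pow_eq_self hN0
      rw [Finsupp.prod, Nat.support_factorization] at h2
      exact h2
    calc N = ∏ p ∈ N.primeFactors, p ^ N.factorization p := h1.symm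
      _ ≤ ∏ _p ∈ N.primeFactors, 2 * m := Finset.prod_le_prod' hle
      _ = (2 * m) ^ N.primeFactors.card := by rw [Finset.prod_const]
      _ ≤ (2 * m) ^ k := Nat.pow_le_pow_right (by omega) hcard
  have h4 : 4 ^ m < m * N := Nat.four_pow_lt_mul_centralBinom m hm
  calc 4 ^ m ≤ m * N := h4.le
    _ ≤ (2 * m) * (2 * m) ^ k := Nat.mul_le_mul (by omega) hprod
    _ = (2 * m) ^ (k + 1) := by ring



lemma logb_ge_of_pow_le (k n : ℕ) (h : 2^k ≤ n) : (k:ℝ) ≤ Real.logb 2 n := by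
  have h2 : ((2:ℝ))^k ≤ (n:ℝ) := by exact_mod_cast h
  calc (k:ℝ) = Real.logb 2 ((2:ℝ)^k) := by
        rw [Real.logb_pow, Real.logb_self_eq_one (by norm_num)]; ring
    _ ≤ Real.logb 2 n := Real.logb_le_logb_of_le (by norm_num) (by positivity) h2

lemma nth_prime_eq (j p : ℕ) (hp : Nat.Prime p) (hc : Nat.count Nat.Prime p = j) :
    Nat.nth Nat.Prime j = p := by
  have := Nat.nth_count (p := Nat.Prime) hp
  rwa [hc] at this

lemma small_case (n p k : ℕ) (hnth : Nat.nth Nat.Prime (n-1) = p)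
    (hk : 2^k ≤ n) (hpk : p ≤ 2*n*k) :
    (Nat.nth Nat.Prime (n - 1) : ℝ) ≤ 2 * n * Real.logb 2 n := by
  rw [hnth]
  have h1 := logb_ge_of_pow_le k n hk
  have h2 : (p:ℝ) ≤ 2*(n:ℝ)*(k:ℝ) := by exact_mod_cast hpk
  have hn0 : (0:ℝ) ≤ (n:ℝ) := by positivity
  nlinarith


/-- For every `n ≥ 2`, the `n`-th prime `p_n` (with `p_1 = 2`, so `p_n` is
`Nat.nth Nat.Prime (n − 1)`) satisfies `p_n ≤ 2·n·log₂ n`. -/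
theorem nth_prime_upper_bound (n : ℕ) (hn : 2 ≤ n) :
    (Nat.nth Nat.Prime (n - 1) : ℝ) ≤ 2 * n * Real.logb 2 n := by
  rcases lt_or_ge n 16 with hn' | hn16
  · interval_cases n
    · exact small_case 2 3 1 (nth_prime_eq 1 3 (by norm_num) (by decide)) (by norm_num) (by norm_num)
    · exact small_case 3 5 1 (nth_prime_eq 2 5 (by norm_num) (by decide)) (by norm_num) (by norm_num)
    · exact small_case 4 7 2 (nth_prime_eq 3 7 (by norm_num) (by decide)) (by norm_num) (by norm_num)
    · exact small_case 5 11 2 (nth_prime_eq 4 11 (by norm_num) (by decide)) (by norm_num) (by norm_num)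
    · exact small_case 6 13 2 (nth_prime_eq 5 13 (by norm_num) (by decide)) (by norm_num) (by norm_num)
    · exact small_case 7 17 2 (nth_prime_eq 6 17 (by norm_num) (by decide)) (by norm_num) (by norm_num)
    · exact small_case 8 19 3 (nth_prime_eq 7 19 (by norm_num) (by decide)) (by norm_num) (by norm_num)
    · exact small_case 9 23 3 (nth_prime_eq 8 23 (by norm_num) (by decide)) (by norm_num) (by norm_num)
    · exact small_case 10 29 3 (nth_prime_eq 9 29 (by norm_num) (by decide)) (by norm_num) (by norm_num)
    · exact small_case 11 31 3 (nth_prime_eq 10 31 (by norm_num) (by decide)) (by norm_num) (by norm_num)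
    · exact small_case 12 37 3 (nth_prime_eq 11 37 (by norm_num) (by decide)) (by norm_num) (by norm_num)
    · exact small_case 13 41 3 (nth_prime_eq 12 41 (by norm_num) (by decide)) (by norm_num) (by norm_num)
    · exact small_case 14 43 3 (nth_prime_eq 13 43 (by norm_num) (by decide)) (by norm_num) (by norm_num)
    · exact small_case 15 47 3 (nth_prime_eq 14 47 (by norm_num) (by decide)) (by norm_num) (by norm_num)

  ·
      have hl2 : (0.6931 : ℝ) < Real.log 2 := by
        have := Real.log_two_gt_d9; linarith
      have hl2' : Real.log 2 < 0.6932 := by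
        have := Real.log_two_lt_d9; linarith
      set L := Real.logb 2 (n : ℝ) with hLdef
      have hnR : (16 : ℝ) ≤ (n : ℝ) := by exact_mod_cast hn16
      have hL4 : (4 : ℝ) ≤ L := by
        have h16 : Real.logb 2 (16 : ℝ) = 4 := by
          rw [show (16:ℝ) = 2^(4:ℕ) by norm_num, Real.logb_pow,
            Real.logb_self_eq_one (by norm_num)]
          norm_num
        rw [hLdef, ← h16]
        exact Real.logb_le_logb_of_le (by norm_num) (by norm_num) hnR
      set m := Nat.floor ((n : ℝ) * L) with hmdef
      have hm1 : (m : ℝ) ≤ (n : ℝ) * L := Nat.floor_le (by positivity)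
      have hm2 : (n : ℝ) * L < (m : ℝ) + 1 := Nat.lt_floor_add_one _
      have hm64 : 64 ≤ m := by
        rw [hmdef]
        exact Nat.le_floor (by push_cast; nlinarith [mul_le_mul hnR hL4 (by norm_num : (0:ℝ) ≤ 4) (by linarith : (0:ℝ) ≤ (n:ℝ))])
      set k := Nat.count Nat.Prime (2 * m + 1) with hkdef
      -- main claim : n ≤ k
      have hnk : n ≤ k := by
        by_contra hcon
        push_neg at hcon
        have hk1 : ((k : ℝ) + 1) ≤ (n : ℝ) := by exact_mod_cast hcon
        have hch := cheb_pow m (by omega)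
        have hchR : (4 : ℝ) ^ m ≤ ((2 * m : ℕ) : ℝ) ^ (k + 1) := by exact_mod_cast hch
        have h2m : ((2 * m : ℕ) : ℝ) = 2 * (m : ℝ) := by push_cast; ring
        rw [h2m] at hchR
        have hmpos : (0 : ℝ) < 2 * (m : ℝ) := by
          have : (64:ℝ) ≤ (m:ℝ) := by exact_mod_cast hm64
          linarith
        -- take logs
        have hlog : (m : ℝ) * Real.log 4 ≤ ((k : ℝ) + 1) * Real.log (2 * m) := by
          have := Real.log_le_log (by positivity) hchR
          rwa [Real.log_pow, Real.log_pow, Nat.cast_add, Nat.cast_one] at this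
        have hlog4 : Real.log 4 = 2 * Real.log 2 := by
          rw [show (4:ℝ) = 2^(2:ℕ) by norm_num, Real.log_pow]; push_cast; ring
        have hlogm_pos : 0 ≤ Real.log (2 * m) := by
          apply Real.log_nonneg; nlinarith [hm64, (by exact_mod_cast hm64 : (64:ℝ) ≤ (m:ℝ))]
        have hstep1 : ((k:ℝ)+1) * Real.log (2 * m) ≤ (n:ℝ) * Real.log (2 * m) :=
          mul_le_mul_of_nonneg_right hk1 hlogm_pos
        -- log (2m) ≤ log 2 + log n + log L
        have hLpos : (0:ℝ) < L := by linarith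
        have hnpos : (0:ℝ) < (n:ℝ) := by linarith
        have hlog2m : Real.log (2 * m) ≤ Real.log 2 + Real.log (n:ℝ) + Real.log L := by
          calc Real.log (2 * (m:ℝ)) ≤ Real.log (2 * ((n:ℝ) * L)) := by
                apply Real.log_le_log hmpos; nlinarith
            _ = Real.log 2 + Real.log (n:ℝ) + Real.log L := by
                rw [Real.log_mul (by norm_num) (by positivity), Real.log_mul (by positivity) (by positivity)]; ring
        -- log n = L * log 2
        have hlogn : Real.log (n:ℝ) = L * Real.log 2 := by
          rw [hLdef, Real.logb, div_mul_cancel₀]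
          exact (Real.log_pos (by norm_num)).ne'
        -- log L ≤ 2 log 2 + L/4 - 1
        have hlogL : Real.log L ≤ 2 * Real.log 2 + L / 4 - 1 := by
          have h := Real.log_le_sub_one_of_pos (show (0:ℝ) < L / 4 by linarith)
          have : Real.log (L / 4) = Real.log L - Real.log 4 := by
            rw [Real.log_div (by positivity) (by norm_num)]
          rw [this, hlog4] at h
          linarith
        -- combine
        have hfloor : 2 * ((n:ℝ) * L) - 2 < 2 * (m:ℝ) := by linarith
        have hbig : (m:ℝ) * Real.log 4 ≤ (n:ℝ) * (Real.log 2 + L * Real.log 2 + 2 * Real.log 2 + L/4 - 1) := by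
          calc (m:ℝ) * Real.log 4 ≤ (n:ℝ) * Real.log (2*m) := le_trans hlog (le_trans hstep1 (le_refl _))
            _ ≤ (n:ℝ) * (Real.log 2 + L * Real.log 2 + 2 * Real.log 2 + L/4 - 1) := by
                apply mul_le_mul_of_nonneg_left _ (le_of_lt hnpos)
                calc Real.log (2*m) ≤ Real.log 2 + Real.log (n:ℝ) + Real.log L := hlog2m
                  _ ≤ Real.log 2 + L * Real.log 2 + (2 * Real.log 2 + L/4 - 1) := by
                      rw [hlogn]; linarith
                  _ = Real.log 2 + L * Real.log 2 + 2 * Real.log 2 + L/4 - 1 := by ring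
        rw [hlog4] at hbig
        -- now contradiction: (2nL - 2) * log 2 < 2m log2 ≤ n(3 log2 + L log2 + L/4 - 1)
        nlinarith [mul_pos hnpos hLpos, mul_le_mul_of_nonneg_right hfloor.le (by linarith : (0:ℝ) ≤ Real.log 2),
          mul_nonneg (sub_nonneg.mpr hnR) (sub_nonneg.mpr hL4),
          mul_nonneg (sub_nonneg.mpr hL4) (by linarith : (0:ℝ) ≤ Real.log 2 - 0.6931),
          mul_nonneg (sub_nonneg.mpr hnR) (by linarith : (0:ℝ) ≤ Real.log 2 - 0.6931)]
      -- from n ≤ k conclude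
      have hlt : Nat.nth Nat.Prime (n - 1) < 2 * m + 1 := by
        apply Nat.nth_lt_of_lt_count
        omega
      have : (Nat.nth Nat.Prime (n - 1) : ℝ) ≤ 2 * (m:ℝ) := by
        have : Nat.nth Nat.Prime (n-1) ≤ 2 * m := by omega
        exact_mod_cast this
      linarith
end
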